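/- arXiv:1106.4199 — 9 statements merged into one kernel-verified Lean document; each statement's English description precedes it below -/
import Mathlib

section
/- Let D be the (n−1)×(n−1) diagonal matrix with D_{ii} = d_i, and let V be the (n−1)×(n−1) matrix with V_{i,j} = min(i,j)·(n − max(i,j))/n. Then X̄ᵀX̄ = D V D; moreover, for every (n−1)×p real matrix R and every i ∈ {1,…,n−1}, with the convention (VR)_{0,·} = 0, one has (VR)_{i,·} − (VR)_{i−1,·} = −(1/n) Σ_{j=1}^{n−1} j · R_{j,·} + Σ_{j=i}^{n−1} R_{j,·}. -/
open Matrix BigOperators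

/-- The `n × (n-1)` design matrix with `X i j = d j` for `i > j` (1-based). -/
noncomputable def designX (n : ℕ) (d : Fin (n-1) → ℝ) : Matrix (Fin n) (Fin (n-1)) ℝ :=
  fun i j => if (j : ℕ) < (i : ℕ) then d j else 0

/-- Column-centering of a matrix: subtract from each entry the mean of its column. -/
noncomputable def centerCols {n m : ℕ} (M : Matrix (Fin n) (Fin m) ℝ) :
    Matrix (Fin n) (Fin m) ℝ :=
  fun i j => M i j - (∑ k : Fin n, M k j) / n

/-- The column-centered design matrix `X̄`. -/
noncomputable def Xbar (n : ℕ) (d : Fin (n-1) → ℝ) : Matrix (Fin n) (Fin (n-1)) ℝ :=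
  centerCols (designX n d)

lemma sum_ite_lt (n m : ℕ) (c : ℝ) :
    ∑ i : Fin n, (if m < (i : ℕ) then c else 0) = ((n - (m+1) : ℕ) : ℝ) * c := by
  rw [Fin.sum_univ_eq_sum_range (fun i => if m < i then c else 0), ← Finset.sum_filter]
  have h : (Finset.range n).filter (fun i => m < i) = Finset.Ico (m+1) n := by
    ext x
    simp [Finset.mem_filter, Finset.mem_Ico, Nat.succ_le_iff, and_comm]
  rw [h, Finset.sum_const, Nat.card_Ico, nsmul_eq_mul]

/-- With `D = diag(d)` and `V i j = min(i,j)(n − max(i,j))/n`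
(1-based indices `i ↦ (i:ℕ)+1`), we have `X̄ᵀX̄ = D V D`; moreover for every
`(n−1) × p` matrix `R` and every row index `i`, with the convention `(VR)_{0,·} = 0`,
`(VR)_{i,·} − (VR)_{i−1,·} = −(1/n) Σ_{j=1}^{n−1} j R_{j,·} + Σ_{j=i}^{n−1} R_{j,·}`. -/
theorem statement3 (n : ℕ) (hn : 2 ≤ n) (d : Fin (n-1) → ℝ) (hd : ∀ j, 0 < d j)
    (V : Matrix (Fin (n-1)) (Fin (n-1)) ℝ)
    (hV : ∀ i j, V i j = ((min ((i : ℕ) + 1) ((j : ℕ) + 1) : ℕ) : ℝ)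
      * ((n : ℝ) - ((max ((i : ℕ) + 1) ((j : ℕ) + 1) : ℕ) : ℝ)) / n) :
    (Xbar n d)ᵀ * Xbar n d = Matrix.diagonal d * V * Matrix.diagonal d ∧
    ∀ (p : ℕ) (R : Matrix (Fin (n-1)) (Fin p) ℝ) (i : Fin (n-1)) (k : Fin p),
      (V * R) i k -
        (if h : 0 < (i : ℕ) then
          (V * R) (⟨(i : ℕ) - 1, lt_of_le_of_lt (Nat.sub_le _ _) i.isLt⟩ : Fin (n-1)) k
        else 0) =
      -(1 / (n : ℝ)) * (∑ j : Fin (n-1), ((j : ℕ) + 1 : ℝ) * R j k)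
        + ∑ j ∈ Finset.univ.filter (fun j : Fin (n-1) => i ≤ j), R j k := by
  have hn0 : (n : ℝ) ≠ 0 := by positivity
  have hlt : ∀ j : Fin (n-1), (j : ℕ) + 1 ≤ n := by
    intro j
    have := j.isLt
    omega
  constructor
  · -- first part
    have hS : ∀ j : Fin (n-1), ∑ i : Fin n, designX n d i j
        = ((n - ((j : ℕ) + 1) : ℕ) : ℝ) * d j := by
      intro j
      simpa [designX] using sum_ite_lt n (j : ℕ) (d j)
    ext j k
    have hP : ∑ i : Fin n, designX n d i j * designX n d i k
        = ((n - (max (j : ℕ) (k : ℕ) + 1) : ℕ) : ℝ) * (d j * d k) := by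
      have hprod : ∀ i : Fin n, designX n d i j * designX n d i k
          = if max (j : ℕ) (k : ℕ) < (i : ℕ) then d j * d k else 0 := by
        intro i
        by_cases hj : (j : ℕ) < (i : ℕ) <;> by_cases hk : (k : ℕ) < (i : ℕ) <;>
          simp [designX, hj, hk, max_lt_iff]
      rw [Finset.sum_congr rfl (fun i _ => hprod i), sum_ite_lt]
    rw [Matrix.mul_apply]
    have expand : ∀ i : Fin n,
        (Xbar n d)ᵀ j i * Xbar n d i k
        = designX n d i j * designX n d i k
          - (∑ l, designX n d l j) / n * designX n d i k
          - (∑ l, designX n d l k) / n * designX n d i j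
          + ((∑ l, designX n d l j) / n) * ((∑ l, designX n d l k) / n) := by
      intro i
      simp only [Matrix.transpose_apply, Xbar, centerCols]
      ring
    rw [Finset.sum_congr rfl (fun i _ => expand i)]
    simp only [Finset.sum_add_distrib, Finset.sum_sub_distrib, ← Finset.mul_sum,
      Finset.sum_const, Finset.card_univ, Fintype.card_fin, nsmul_eq_mul, hS, hP]
    rw [Matrix.mul_diagonal, Matrix.diagonal_mul, hV]
    rcases le_total (j : ℕ) (k : ℕ) with hjk | hjk
    · rw [max_eq_right hjk, min_eq_left (by omega : (j:ℕ)+1 ≤ (k:ℕ)+1),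
        max_eq_right (by omega : (j:ℕ)+1 ≤ (k:ℕ)+1),
        Nat.cast_sub (hlt k), Nat.cast_sub (hlt j)]
      push_cast
      field_simp
      ring
    · rw [max_eq_left hjk, min_eq_right (by omega : (k:ℕ)+1 ≤ (j:ℕ)+1),
        max_eq_left (by omega : (k:ℕ)+1 ≤ (j:ℕ)+1),
        Nat.cast_sub (hlt k), Nat.cast_sub (hlt j)]
      push_cast
      field_simp
      ring
  · intro p R i k
    have key2 : ∀ j : Fin (n-1),
        V i j - (if h : 0 < (i : ℕ) then
          V (⟨(i : ℕ) - 1, lt_of_le_of_lt (Nat.sub_le _ _) i.isLt⟩ : Fin (n-1)) j else 0)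
        = (if i ≤ j then (1 : ℝ) else 0) - ((j : ℕ) + 1) / n := by
      intro j
      by_cases h : 0 < (i : ℕ)
      · rw [dif_pos h, hV, hV]
        have hi1 : (i : ℕ) - 1 + 1 = (i : ℕ) := Nat.succ_pred_eq_of_pos h
        simp only [hi1]
        by_cases hij : i ≤ j
        · have hij' : (i : ℕ) ≤ (j : ℕ) := hij
          rw [min_eq_left (by omega), max_eq_right (by omega : (i:ℕ)+1 ≤ (j:ℕ)+1),
            min_eq_left (by omega), max_eq_right (by omega : (i:ℕ) ≤ (j:ℕ)+1),
            if_pos hij]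
          push_cast
          field_simp
          try ring
        · have hij' : (j : ℕ) + 1 ≤ (i : ℕ) := by
            have : ¬ (i : ℕ) ≤ (j : ℕ) := fun hc => hij (Fin.le_def.mpr hc)
            omega
          rw [min_eq_right (by omega : (j:ℕ)+1 ≤ (i:ℕ)+1), max_eq_left (by omega : (j:ℕ)+1 ≤ (i:ℕ)+1),
            min_eq_right hij', max_eq_left hij', if_neg hij]
          push_cast
          field_simp
          try ring
      · rw [dif_neg h, hV]
        have h0 : (i : ℕ) = 0 := by omega
        have hij : i ≤ j := Fin.le_def.mpr (by omega)
        simp only [h0]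
        rw [min_eq_left (by omega : 0+1 ≤ (j:ℕ)+1), max_eq_right (by omega : 0+1 ≤ (j:ℕ)+1),
          if_pos hij]
        push_cast
        field_simp
        try ring
    have hdite : (if h : 0 < (i : ℕ) then
          (V * R) (⟨(i : ℕ) - 1, lt_of_le_of_lt (Nat.sub_le _ _) i.isLt⟩ : Fin (n-1)) k else 0)
        = ∑ j, (if h : 0 < (i : ℕ) then
            V (⟨(i : ℕ) - 1, lt_of_le_of_lt (Nat.sub_le _ _) i.isLt⟩ : Fin (n-1)) j else 0)
          * R j k := by
      split
      · rw [Matrix.mul_apply]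
      · simp
    rw [Matrix.mul_apply, hdite, ← Finset.sum_sub_distrib]
    have step : ∀ j : Fin (n-1), V i j * R j k - (if h : 0 < (i : ℕ) then
          V (⟨(i : ℕ) - 1, lt_of_le_of_lt (Nat.sub_le _ _) i.isLt⟩ : Fin (n-1)) j else 0) * R j k
        = ((if i ≤ j then (1 : ℝ) else 0) - ((j : ℕ) + 1) / n) * R j k := by
      intro j
      rw [← sub_mul, key2 j]
    rw [Finset.sum_congr rfl (fun j _ => step j)]
    simp only [sub_mul, Finset.sum_sub_distrib, ite_mul, one_mul, zero_mul]
    rw [← Finset.sum_filter]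
    have hleft : -(1 / (n : ℝ)) * (∑ j : Fin (n-1), ((j : ℕ) + 1 : ℝ) * R j k)
        = -(∑ j : Fin (n-1), ((j : ℕ) + 1 : ℝ) / n * R j k) := by
      rw [neg_mul, neg_inj, Finset.mul_sum]
      exact Finset.sum_congr rfl (fun j _ => by ring)
    rw [hleft, sub_eq_neg_add]
end

section
/- Let 1 ≤ a_1 < a_2 < ⋯ < a_k ≤ n−1 be integers, and set by convention a_0 = 0 and a_{k+1} = n. Let V be the k×k matrix with entries V_{i,j} = d_{a_i} d_{a_j} a_{min(i,j)} (n − a_{max(i,j)})/n. Then V is invertible, and its inverse is the tridiagonal matrix with diagonal entries (V^{−1})_{i,i} = d_{a_i}^{−2} ( 1/(a_i − a_{i−1}) + 1/(a_{i+1} − a_i) ) for i = 1,…,k, off-diagonal entries (V^{−1})_{i,i+1} = (V^{−1})_{i+1,i} = − d_{a_i}^{−1} d_{a_{i+1}}^{−1} / (a_{i+1} − a_i) for i = 1,…,k−1, and all entries with |i − j| ≥ 2 equal to zero. -/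
open Matrix BigOperators


section statement4aux

private lemma st4_aux_lt (N P C Q X d1 d2 d3 di : ℝ) (h1 : C - P ≠ 0) (h2 : Q - C ≠ 0)
    (hN : N ≠ 0) (hd1 : d1 ≠ 0) (hd2 : d2 ≠ 0) (hd3 : d3 ≠ 0) :
    di * d2 * X * (N - C) / N * (d2⁻¹ ^ 2 * (1 / (C - P) + 1 / (Q - C)))
    + di * d1 * X * (N - P) / N * (-(d1⁻¹ * d2⁻¹) / (C - P))
    + di * d3 * X * (N - Q) / N * (-(d3⁻¹ * d2⁻¹) / (Q - C)) = 0 := by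
  field_simp
  ring

private lemma st4_aux_eq (N P C Q d1 d2 d3 : ℝ) (h1 : C - P ≠ 0) (h2 : Q - C ≠ 0)
    (hN : N ≠ 0) (hd1 : d1 ≠ 0) (hd2 : d2 ≠ 0) (hd3 : d3 ≠ 0) :
    d2 * d2 * C * (N - C) / N * (d2⁻¹ ^ 2 * (1 / (C - P) + 1 / (Q - C)))
    + d2 * d1 * P * (N - C) / N * (-(d1⁻¹ * d2⁻¹) / (C - P))
    + d2 * d3 * C * (N - Q) / N * (-(d3⁻¹ * d2⁻¹) / (Q - C)) = 1 := by
  field_simp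
  ring

private lemma st4_aux_gt (N P C Q Y d1 d2 d3 di : ℝ) (h1 : C - P ≠ 0) (h2 : Q - C ≠ 0)
    (hN : N ≠ 0) (hd1 : d1 ≠ 0) (hd2 : d2 ≠ 0) (hd3 : d3 ≠ 0) :
    di * d2 * C * (N - Y) / N * (d2⁻¹ ^ 2 * (1 / (C - P) + 1 / (Q - C)))
    + di * d1 * P * (N - Y) / N * (-(d1⁻¹ * d2⁻¹) / (C - P))
    + di * d3 * Q * (N - Y) / N * (-(d3⁻¹ * d2⁻¹) / (Q - C)) = 0 := by
  field_simp
  ring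

private lemma st4_aux_lt_r (N P C X d1 d2 di : ℝ) (h1 : C - P ≠ 0) (h2 : N - C ≠ 0)
    (hN : N ≠ 0) (hd1 : d1 ≠ 0) (hd2 : d2 ≠ 0) :
    di * d2 * X * (N - C) / N * (d2⁻¹ ^ 2 * (1 / (C - P) + 1 / (N - C)))
    + di * d1 * X * (N - P) / N * (-(d1⁻¹ * d2⁻¹) / (C - P)) = 0 := by
  field_simp
  ring

private lemma st4_aux_eq_r (N P C d1 d2 : ℝ) (h1 : C - P ≠ 0) (h2 : N - C ≠ 0)
    (hN : N ≠ 0) (hd1 : d1 ≠ 0) (hd2 : d2 ≠ 0) :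
    d2 * d2 * C * (N - C) / N * (d2⁻¹ ^ 2 * (1 / (C - P) + 1 / (N - C)))
    + d2 * d1 * P * (N - C) / N * (-(d1⁻¹ * d2⁻¹) / (C - P)) = 1 := by
  field_simp
  ring

private lemma st4_aux_eq_l (N C Q d2 d3 : ℝ) (h1 : C ≠ 0) (h2 : Q - C ≠ 0)
    (hN : N ≠ 0) (hd2 : d2 ≠ 0) (hd3 : d3 ≠ 0) :
    d2 * d2 * C * (N - C) / N * (d2⁻¹ ^ 2 * (1 / (C - 0) + 1 / (Q - C)))
    + d2 * d3 * C * (N - Q) / N * (-(d3⁻¹ * d2⁻¹) / (Q - C)) = 1 := by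
  rw [sub_zero]
  field_simp
  ring

private lemma st4_aux_gt_l (N C Q Y d2 d3 di : ℝ) (h1 : C ≠ 0) (h2 : Q - C ≠ 0)
    (hN : N ≠ 0) (hd2 : d2 ≠ 0) (hd3 : d3 ≠ 0) :
    di * d2 * C * (N - Y) / N * (d2⁻¹ ^ 2 * (1 / (C - 0) + 1 / (Q - C)))
    + di * d3 * Q * (N - Y) / N * (-(d3⁻¹ * d2⁻¹) / (Q - C)) = 0 := by
  rw [sub_zero]
  field_simp
  ring

private lemma st4_aux_single (N C d2 : ℝ) (h1 : C ≠ 0) (h2 : N - C ≠ 0) (hN : N ≠ 0)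
    (hd2 : d2 ≠ 0) :
    d2 * d2 * C * (N - C) / N * (d2⁻¹ ^ 2 * (1 / (C - 0) + 1 / (N - C))) = 1 := by
  rw [sub_zero]
  field_simp
  ring

end statement4aux

set_option maxHeartbeats 1000000 in
/-- Let `1 ≤ a₁ < ⋯ < a_k ≤ n−1` (formalized as a strictly monotone
`a : Fin k → Fin (n-1)`, the 1-based value of `a i` being `(a i : ℕ) + 1`), with the
conventions `a₀ = 0`, `a_{k+1} = n` encoded by the extension `av : ℕ → ℝ`
(`av I` is the 1-based value `a_I`).  Let `V` be the `k × k` matrix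
`V i j = d_{aᵢ} d_{aⱼ} a_{min(i,j)} (n − a_{max(i,j)})/n`.  Then `V` is invertible and its
inverse is the tridiagonal matrix with diagonal entries
`d_{aᵢ}⁻² (1/(aᵢ − a_{i−1}) + 1/(a_{i+1} − aᵢ))`, sub/super-diagonal entries
`−d_{aᵢ}⁻¹ d_{a_{i+1}}⁻¹/(a_{i+1} − aᵢ)`, and zero entries for `|i − j| ≥ 2`. -/
theorem statement4 (n : ℕ) (hn : 2 ≤ n) (d : Fin (n-1) → ℝ) (hd : ∀ j, 0 < d j)
    (k : ℕ) (hk : 1 ≤ k) (a : Fin k → Fin (n-1)) (ha : StrictMono a)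
    (av : ℕ → ℝ) (hav0 : av 0 = 0) (havn : av (k + 1) = n)
    (hava : ∀ i : Fin k, av ((i : ℕ) + 1) = (a i : ℕ) + 1)
    (V : Matrix (Fin k) (Fin k) ℝ)
    (hV : ∀ i j, V i j = d (a i) * d (a j) * ((a (min i j) : ℕ) + 1 : ℝ)
      * ((n : ℝ) - ((a (max i j) : ℕ) + 1)) / n)
    (T : Matrix (Fin k) (Fin k) ℝ)
    (hT : ∀ i j, T i j =
      if (i : ℕ) = (j : ℕ) then
        ((d (a i))⁻¹) ^ 2 * (1 / (av ((i : ℕ) + 1) - av (i : ℕ))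
          + 1 / (av ((i : ℕ) + 2) - av ((i : ℕ) + 1)))
      else if (j : ℕ) = (i : ℕ) + 1 then
        -((d (a i))⁻¹ * (d (a j))⁻¹) / (av ((j : ℕ) + 1) - av ((i : ℕ) + 1))
      else if (i : ℕ) = (j : ℕ) + 1 then
        -((d (a i))⁻¹ * (d (a j))⁻¹) / (av ((i : ℕ) + 1) - av ((j : ℕ) + 1))
      else 0) :
    IsUnit V ∧ V⁻¹ = T := by
  have hn0 : (n : ℝ) ≠ 0 := Nat.cast_ne_zero.mpr (by omega)
  have hdne : ∀ x, d x ≠ 0 := fun x => (hd x).ne'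
  have hmono : ∀ m : ℕ, m ≤ k → av m < av (m + 1) := by
    intro m hm
    match m with
    | 0 =>
        have h0 : av 1 = ((a ⟨0, by omega⟩ : ℕ) : ℝ) + 1 := hava ⟨0, by omega⟩
        rw [hav0, show (0:ℕ)+1 = 1 from rfl, h0]
        positivity
    | Nat.succ m =>
        have hmk : m < k := by omega
        have h1 : av (m + 1) = ((a ⟨m, hmk⟩ : ℕ) : ℝ) + 1 := hava ⟨m, hmk⟩
        rcases Nat.lt_or_ge (m + 1) k with h | h
        · have h2 : av (m + 1 + 1) = ((a ⟨m + 1, h⟩ : ℕ) : ℝ) + 1 := hava ⟨m + 1, h⟩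
          rw [h1, h2]
          have hlt : (a ⟨m, hmk⟩ : ℕ) < (a ⟨m + 1, h⟩ : ℕ) := ha (by simp [Fin.lt_def])
          have : ((a ⟨m, hmk⟩ : ℕ) : ℝ) < ((a ⟨m + 1, h⟩ : ℕ) : ℝ) := Nat.cast_lt.mpr hlt
          linarith
        · rw [h1, show m + 1 + 1 = k + 1 from by omega, havn]
          have hlt : (a ⟨m, hmk⟩ : ℕ) + 1 < n := by
            have := (a ⟨m, hmk⟩).isLt; omega
          exact_mod_cast hlt
  have hsub : ∀ m : ℕ, m ≤ k → av (m + 1) - av m ≠ 0 :=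
    fun m hm => sub_ne_zero.mpr (hmono m hm).ne'
  have hVav : ∀ p q : Fin k, V p q =
      d (a p) * d (a q) * av (((min p q : Fin k) : ℕ) + 1) * ((n : ℝ) - av (((max p q : Fin k) : ℕ) + 1)) / n := by
    intro p q; rw [hV, hava, hava]
  have key : V * T = 1 := by
    ext i j
    rw [Matrix.mul_apply, Matrix.one_apply]
    have hsplit : (∑ l : Fin k, V i l * T l j) =
        (∑ l : Fin k, if l = j then V i l * T l j else 0)
        + (∑ l : Fin k, if (l : ℕ) + 1 = (j : ℕ) then V i l * T l j else 0)
        + (∑ l : Fin k, if (l : ℕ) = (j : ℕ) + 1 then V i l * T l j else 0) := by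
      rw [← Finset.sum_add_distrib, ← Finset.sum_add_distrib]
      refine Finset.sum_congr rfl fun l _ => ?_
      by_cases h1 : l = j
      · subst h1
        rw [if_pos rfl, if_neg (by omega), if_neg (by omega), add_zero, add_zero]
      · have h1' : ¬ (l : ℕ) = (j : ℕ) := fun h => h1 (Fin.ext h)
        by_cases h2 : (l : ℕ) + 1 = (j : ℕ)
        · rw [if_neg h1, if_pos h2, if_neg (by omega), zero_add, add_zero]
        · by_cases h3 : (l : ℕ) = (j : ℕ) + 1
          · rw [if_neg h1, if_neg h2, if_pos h3, zero_add, zero_add]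
          · have hT0 : T l j = 0 := by
              rw [hT, if_neg h1', if_neg (fun h => h2 h.symm), if_neg h3]
            rw [hT0, mul_zero, if_neg h1, if_neg h2, if_neg h3, add_zero, add_zero]
    have hs1 : (∑ l : Fin k, if l = j then V i l * T l j else 0) = V i j * T j j := by
      rw [Finset.sum_ite_eq' Finset.univ j (fun l => V i l * T l j)]
      simp
    have hTdiag : T j j = (d (a j))⁻¹ ^ 2 *
        (1 / (av ((j:ℕ)+1) - av (j:ℕ)) + 1 / (av ((j:ℕ)+2) - av ((j:ℕ)+1))) := by
      rw [hT, if_pos rfl]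
    have den1 : av ((j:ℕ)+1) - av (j:ℕ) ≠ 0 := hsub _ (Nat.le_of_lt j.isLt)
    have den2 : av ((j:ℕ)+2) - av ((j:ℕ)+1) ≠ 0 := by
      have := hsub ((j:ℕ)+1) j.isLt
      rwa [show (j:ℕ)+1+1 = (j:ℕ)+2 from rfl] at this
    rw [hsplit, hs1]
    by_cases hj1 : 1 ≤ (j : ℕ)
    · have hjmlt : (j:ℕ) - 1 < k := by have := j.isLt; omega
      obtain ⟨jm, hjmv⟩ : ∃ jm : Fin k, (jm : ℕ) = (j:ℕ) - 1 := ⟨⟨(j:ℕ)-1, hjmlt⟩, rfl⟩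
      have hs2 : (∑ l : Fin k, if (l:ℕ)+1 = (j:ℕ) then V i l * T l j else 0) = V i jm * T jm j := by
        have hc : (∑ l : Fin k, if (l:ℕ)+1 = (j:ℕ) then V i l * T l j else 0)
            = (∑ l : Fin k, if l = jm then V i l * T l j else 0) := by
          refine Finset.sum_congr rfl fun l _ => if_congr ?_ rfl rfl
          rw [Fin.ext_iff, hjmv]; omega
        rw [hc, Finset.sum_ite_eq' Finset.univ jm (fun l => V i l * T l j)]
        simp
      have hTjm : T jm j = -((d (a jm))⁻¹ * (d (a j))⁻¹) / (av ((j:ℕ)+1) - av (j:ℕ)) := by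
        rw [hT, if_neg (by rw [hjmv]; omega), if_pos (by rw [hjmv]; omega)]
        rw [hjmv, show (j:ℕ)-1+1 = (j:ℕ) from by omega]
      have havjm : av ((jm:ℕ)+1) = av (j:ℕ) := by
        rw [hjmv, show (j:ℕ)-1+1 = (j:ℕ) from by omega]
      by_cases hj2 : (j:ℕ)+1 < k
      · obtain ⟨jp, hjpv⟩ : ∃ jp : Fin k, (jp : ℕ) = (j:ℕ) + 1 := ⟨⟨(j:ℕ)+1, hj2⟩, rfl⟩
        have hs3 : (∑ l : Fin k, if (l:ℕ) = (j:ℕ)+1 then V i l * T l j else 0) = V i jp * T jp j := by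
          have hc : (∑ l : Fin k, if (l:ℕ) = (j:ℕ)+1 then V i l * T l j else 0)
              = (∑ l : Fin k, if l = jp then V i l * T l j else 0) := by
            refine Finset.sum_congr rfl fun l _ => if_congr ?_ rfl rfl
            rw [Fin.ext_iff, hjpv]
          rw [hc, Finset.sum_ite_eq' Finset.univ jp (fun l => V i l * T l j)]
          simp
        have hTjp : T jp j = -((d (a jp))⁻¹ * (d (a j))⁻¹) / (av ((j:ℕ)+2) - av ((j:ℕ)+1)) := by
          rw [hT, if_neg (by rw [hjpv]; omega), if_neg (by rw [hjpv]; omega), if_pos hjpv]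
          rw [hjpv, show (j:ℕ)+1+1 = (j:ℕ)+2 from by omega]
        have havjp : av ((jp:ℕ)+1) = av ((j:ℕ)+2) := by
          rw [hjpv, show (j:ℕ)+1+1 = (j:ℕ)+2 from by omega]
        rw [hs2, hs3]
        simp only [hVav]
        rw [hTdiag, hTjm, hTjp]
        rcases lt_trichotomy (i:ℕ) (j:ℕ) with hij | hij | hij
        · have hne : i ≠ j := fun h => by rw [h] at hij; omega
          have e1 : min i jm = i := min_eq_left (Fin.le_def.mpr (by rw [hjmv]; omega))
          have e2 : max i jm = jm := max_eq_right (Fin.le_def.mpr (by rw [hjmv]; omega))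
          have e3 : min i j = i := min_eq_left (Fin.le_def.mpr (by omega))
          have e4 : max i j = j := max_eq_right (Fin.le_def.mpr (by omega))
          have e5 : min i jp = i := min_eq_left (Fin.le_def.mpr (by rw [hjpv]; omega))
          have e6 : max i jp = jp := max_eq_right (Fin.le_def.mpr (by rw [hjpv]; omega))
          rw [if_neg hne, e1, e2, e3, e4, e5, e6, havjm, havjp]
          linear_combination st4_aux_lt (n:ℝ) (av (j:ℕ)) (av ((j:ℕ)+1)) (av ((j:ℕ)+2))
            (av ((i:ℕ)+1)) (d (a jm)) (d (a j)) (d (a jp)) (d (a i))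
            den1 den2 hn0 (hdne (a jm)) (hdne (a j)) (hdne (a jp))
        · have e : i = j := Fin.ext hij
          subst e
          have e1 : min i jm = jm := min_eq_right (Fin.le_def.mpr (by rw [hjmv]; omega))
          have e2 : max i jm = i := max_eq_left (Fin.le_def.mpr (by rw [hjmv]; omega))
          have e5 : min i jp = i := min_eq_left (Fin.le_def.mpr (by rw [hjpv]; omega))
          have e6 : max i jp = jp := max_eq_right (Fin.le_def.mpr (by rw [hjpv]; omega))
          rw [if_pos rfl, e1, e2, e5, e6, min_self, max_self, havjm, havjp]
          linear_combination st4_aux_eq (n:ℝ) (av (i:ℕ)) (av ((i:ℕ)+1)) (av ((i:ℕ)+2))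
            (d (a jm)) (d (a i)) (d (a jp))
            den1 den2 hn0 (hdne (a jm)) (hdne (a i)) (hdne (a jp))
        · have hne : i ≠ j := fun h => by rw [h] at hij; omega
          have e1 : min i jm = jm := min_eq_right (Fin.le_def.mpr (by rw [hjmv]; omega))
          have e2 : max i jm = i := max_eq_left (Fin.le_def.mpr (by rw [hjmv]; omega))
          have e3 : min i j = j := min_eq_right (Fin.le_def.mpr (by omega))
          have e4 : max i j = i := max_eq_left (Fin.le_def.mpr (by omega))
          have e5 : min i jp = jp := min_eq_right (Fin.le_def.mpr (by rw [hjpv]; omega))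
          have e6 : max i jp = i := max_eq_left (Fin.le_def.mpr (by rw [hjpv]; omega))
          rw [if_neg hne, e1, e2, e3, e4, e5, e6, havjm, havjp]
          linear_combination st4_aux_gt (n:ℝ) (av (j:ℕ)) (av ((j:ℕ)+1)) (av ((j:ℕ)+2))
            (av ((i:ℕ)+1)) (d (a jm)) (d (a j)) (d (a jp)) (d (a i))
            den1 den2 hn0 (hdne (a jm)) (hdne (a j)) (hdne (a jp))
      · have hs3 : (∑ l : Fin k, if (l:ℕ) = (j:ℕ)+1 then V i l * T l j else 0) = 0 :=
          Finset.sum_eq_zero (fun l _ => if_neg (by have := l.isLt; omega))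
        have havtop : av ((j:ℕ)+2) = (n:ℝ) := by
          rw [show (j:ℕ)+2 = k+1 from by have := j.isLt; omega, havn]
        have den2' : (n:ℝ) - av ((j:ℕ)+1) ≠ 0 := by rw [← havtop]; exact den2
        rw [hs2, hs3, add_zero]
        simp only [hVav]
        rw [hTdiag, hTjm, havtop]
        rcases lt_trichotomy (i:ℕ) (j:ℕ) with hij | hij | hij
        · have hne : i ≠ j := fun h => by rw [h] at hij; omega
          have e1 : min i jm = i := min_eq_left (Fin.le_def.mpr (by rw [hjmv]; omega))
          have e2 : max i jm = jm := max_eq_right (Fin.le_def.mpr (by rw [hjmv]; omega))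
          have e3 : min i j = i := min_eq_left (Fin.le_def.mpr (by omega))
          have e4 : max i j = j := max_eq_right (Fin.le_def.mpr (by omega))
          rw [if_neg hne, e1, e2, e3, e4, havjm]
          linear_combination st4_aux_lt_r (n:ℝ) (av (j:ℕ)) (av ((j:ℕ)+1)) (av ((i:ℕ)+1))
            (d (a jm)) (d (a j)) (d (a i))
            den1 den2' hn0 (hdne (a jm)) (hdne (a j))
        · have e : i = j := Fin.ext hij
          subst e
          have e1 : min i jm = jm := min_eq_right (Fin.le_def.mpr (by rw [hjmv]; omega))
          have e2 : max i jm = i := max_eq_left (Fin.le_def.mpr (by rw [hjmv]; omega))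
          rw [if_pos rfl, e1, e2, min_self, max_self, havjm]
          linear_combination st4_aux_eq_r (n:ℝ) (av (i:ℕ)) (av ((i:ℕ)+1))
            (d (a jm)) (d (a i))
            den1 den2' hn0 (hdne (a jm)) (hdne (a i))
        · exact absurd hij (by have := i.isLt; omega)
    · have hj0 : (j:ℕ) = 0 := by omega
      have hav0' : av (j:ℕ) = 0 := by rw [hj0, hav0]
      have den1' : av ((j:ℕ)+1) ≠ 0 := by
        have := den1; rw [hav0', sub_zero] at this; exact this
      have hs2 : (∑ l : Fin k, if (l:ℕ)+1 = (j:ℕ) then V i l * T l j else 0) = 0 :=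
        Finset.sum_eq_zero (fun l _ => if_neg (by omega))
      by_cases hj2 : (j:ℕ)+1 < k
      · obtain ⟨jp, hjpv⟩ : ∃ jp : Fin k, (jp : ℕ) = (j:ℕ) + 1 := ⟨⟨(j:ℕ)+1, hj2⟩, rfl⟩
        have hs3 : (∑ l : Fin k, if (l:ℕ) = (j:ℕ)+1 then V i l * T l j else 0) = V i jp * T jp j := by
          have hc : (∑ l : Fin k, if (l:ℕ) = (j:ℕ)+1 then V i l * T l j else 0)
              = (∑ l : Fin k, if l = jp then V i l * T l j else 0) := by
            refine Finset.sum_congr rfl fun l _ => if_congr ?_ rfl rfl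
            rw [Fin.ext_iff, hjpv]
          rw [hc, Finset.sum_ite_eq' Finset.univ jp (fun l => V i l * T l j)]
          simp
        have hTjp : T jp j = -((d (a jp))⁻¹ * (d (a j))⁻¹) / (av ((j:ℕ)+2) - av ((j:ℕ)+1)) := by
          rw [hT, if_neg (by rw [hjpv]; omega), if_neg (by rw [hjpv]; omega), if_pos hjpv]
          rw [hjpv, show (j:ℕ)+1+1 = (j:ℕ)+2 from by omega]
        have havjp : av ((jp:ℕ)+1) = av ((j:ℕ)+2) := by
          rw [hjpv, show (j:ℕ)+1+1 = (j:ℕ)+2 from by omega]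
        rw [hs2, hs3, add_zero]
        simp only [hVav]
        rw [hTdiag, hTjp, hav0']
        rcases lt_trichotomy (i:ℕ) (j:ℕ) with hij | hij | hij
        · exact absurd hij (by omega)
        · have e : i = j := Fin.ext hij
          subst e
          have e5 : min i jp = i := min_eq_left (Fin.le_def.mpr (by rw [hjpv]; omega))
          have e6 : max i jp = jp := max_eq_right (Fin.le_def.mpr (by rw [hjpv]; omega))
          rw [if_pos rfl, e5, e6, min_self, max_self, havjp]
          linear_combination st4_aux_eq_l (n:ℝ) (av ((i:ℕ)+1)) (av ((i:ℕ)+2))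
            (d (a i)) (d (a jp))
            den1' den2 hn0 (hdne (a i)) (hdne (a jp))
        · have hne : i ≠ j := fun h => by rw [h] at hij; omega
          have e3 : min i j = j := min_eq_right (Fin.le_def.mpr (by omega))
          have e4 : max i j = i := max_eq_left (Fin.le_def.mpr (by omega))
          have e5 : min i jp = jp := min_eq_right (Fin.le_def.mpr (by rw [hjpv]; omega))
          have e6 : max i jp = i := max_eq_left (Fin.le_def.mpr (by rw [hjpv]; omega))
          rw [if_neg hne, e3, e4, e5, e6, havjp]
          linear_combination st4_aux_gt_l (n:ℝ) (av ((j:ℕ)+1)) (av ((j:ℕ)+2))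
            (av ((i:ℕ)+1)) (d (a j)) (d (a jp)) (d (a i))
            den1' den2 hn0 (hdne (a j)) (hdne (a jp))
      · have hs3 : (∑ l : Fin k, if (l:ℕ) = (j:ℕ)+1 then V i l * T l j else 0) = 0 :=
          Finset.sum_eq_zero (fun l _ => if_neg (by have := l.isLt; omega))
        have havtop : av ((j:ℕ)+2) = (n:ℝ) := by
          rw [show (j:ℕ)+2 = k+1 from by have := j.isLt; omega, havn]
        have den2' : (n:ℝ) - av ((j:ℕ)+1) ≠ 0 := by rw [← havtop]; exact den2
        have e : i = j := Fin.ext (by have := i.isLt; have := j.isLt; omega)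
        subst e
        rw [hs2, hs3, add_zero, add_zero]
        simp only [hVav]
        rw [hTdiag, min_self, max_self, hav0', havtop, if_pos trivial]
        linear_combination st4_aux_single (n:ℝ) (av ((i:ℕ)+1)) (d (a i))
          den1' den2' hn0 (hdne (a i))
  have key2 : T * V = 1 := mul_eq_one_comm.mp key
  exact ⟨⟨⟨V, T, key, key2⟩, rfl⟩, Matrix.inv_eq_right_inv key⟩
end

section
/- Let A ∈ ℝ^{n×m}, Z ∈ ℝ^{n×p} and λ ≥ 0, and define F(β) = ½‖Z − Aβ‖² + λ Σ_{i=1}^{m} ‖β_{i,·}‖ for β ∈ ℝ^{m×p}, where β_{i,·} is the i-th row of β and ‖·‖ denotes the Frobenius (Euclidean) norm. Then β = 0 is a global minimizer of F if and only if ‖(AᵀZ)_{i,·}‖ ≤ λ for every i ∈ {1,…,m}. -/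
open Matrix BigOperators

lemma trace_id {n m p : ℕ} (A : Matrix (Fin n) (Fin m) ℝ)
    (Z : Matrix (Fin n) (Fin p) ℝ) (β : Matrix (Fin m) (Fin p) ℝ) :
    ∑ j : Fin n, ∑ k : Fin p, Z j k * (A * β) j k
      = ∑ i : Fin m, ∑ k : Fin p, (Aᵀ * Z) i k * β i k := by
  calc ∑ j : Fin n, ∑ k : Fin p, Z j k * (A * β) j k
      = ∑ j : Fin n, ∑ k : Fin p, ∑ l : Fin m, A j l * Z j k * β l k := by
        refine Finset.sum_congr rfl fun j _ => Finset.sum_congr rfl fun k _ => ?_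
        rw [Matrix.mul_apply, Finset.mul_sum]
        exact Finset.sum_congr rfl fun l _ => by ring
    _ = ∑ j : Fin n, ∑ l : Fin m, ∑ k : Fin p, A j l * Z j k * β l k := by
        refine Finset.sum_congr rfl fun j _ => ?_
        exact Finset.sum_comm (f := fun k l => A j l * Z j k * β l k)
    _ = ∑ l : Fin m, ∑ j : Fin n, ∑ k : Fin p, A j l * Z j k * β l k :=
        Finset.sum_comm (f := fun j l => ∑ k : Fin p, A j l * Z j k * β l k)
    _ = ∑ l : Fin m, ∑ k : Fin p, ∑ j : Fin n, A j l * Z j k * β l k := by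
        refine Finset.sum_congr rfl fun l _ => ?_
        exact Finset.sum_comm (f := fun j k => A j l * Z j k * β l k)
    _ = ∑ i : Fin m, ∑ k : Fin p, (Aᵀ * Z) i k * β i k := by
        refine Finset.sum_congr rfl fun l _ => Finset.sum_congr rfl fun k _ => ?_
        rw [Matrix.mul_apply, Finset.sum_mul]
        exact Finset.sum_congr rfl fun j _ => by rw [Matrix.transpose_apply]

/-- For `A ∈ ℝ^{n×m}`, `Z ∈ ℝ^{n×p}`, `λ ≥ 0` and the group Lasso
objective `F(β) = ½‖Z − Aβ‖² + λ Σᵢ ‖β_{i,·}‖`, the zero matrix is a global minimizer of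
`F` if and only if `‖(AᵀZ)_{i,·}‖ ≤ λ` for every row index `i`. -/
theorem statement6 (n m p : ℕ) (A : Matrix (Fin n) (Fin m) ℝ)
    (Z : Matrix (Fin n) (Fin p) ℝ) (lam : ℝ) (hlam : 0 ≤ lam)
    (F : Matrix (Fin m) (Fin p) ℝ → ℝ)
    (hF : ∀ β, F β = (1 / 2) * (∑ i : Fin n, ∑ k : Fin p, (Z i k - (A * β) i k) ^ 2)
      + lam * ∑ i : Fin m, Real.sqrt (∑ k : Fin p, (β i k) ^ 2)) :
    (∀ β, F 0 ≤ F β) ↔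
      ∀ i : Fin m, Real.sqrt (∑ k : Fin p, ((Aᵀ * Z) i k) ^ 2) ≤ lam := by
  have hF0 : F 0 = (1 / 2) * ∑ j : Fin n, ∑ k : Fin p, (Z j k) ^ 2 := by
    rw [hF]; simp
  have hgap : ∀ β, F β - F 0 =
      (1 / 2) * (∑ j : Fin n, ∑ k : Fin p, ((A * β) j k) ^ 2)
      - (∑ i : Fin m, ∑ k : Fin p, (Aᵀ * Z) i k * β i k)
      + lam * ∑ i : Fin m, Real.sqrt (∑ k : Fin p, (β i k) ^ 2) := by
    intro β
    rw [hF, hF0, ← trace_id A Z β]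
    have h1 : ∑ j : Fin n, ∑ k : Fin p, (Z j k - (A * β) j k) ^ 2
        = ∑ j : Fin n, ∑ k : Fin p, (Z j k) ^ 2
          - 2 * ∑ j : Fin n, ∑ k : Fin p, Z j k * (A * β) j k
          + ∑ j : Fin n, ∑ k : Fin p, ((A * β) j k) ^ 2 := by
      simp only [sub_sq, Finset.sum_add_distrib, Finset.sum_sub_distrib, Finset.mul_sum]
      ring
    rw [h1]; ring
  constructor
  · intro hmin i
    set v : Fin p → ℝ := fun k => (Aᵀ * Z) i k with hv
    set N : ℝ := Real.sqrt (∑ k : Fin p, (v k) ^ 2) with hN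
    have hN0 : 0 ≤ N := Real.sqrt_nonneg _
    have hNsq : N ^ 2 = ∑ k : Fin p, (v k) ^ 2 := by
      rw [hN, Real.sq_sqrt]; positivity
    set S : ℝ := (∑ j : Fin n, (A j i) ^ 2) * (∑ k : Fin p, (v k) ^ 2) with hS
    have hS0 : 0 ≤ S := by positivity
    have key : ∀ t : ℝ, 0 < t → 0 ≤ (1 / 2) * t * S - N ^ 2 + lam * N := by
      intro t ht
      set β : Matrix (Fin m) (Fin p) ℝ := Matrix.of fun j k => if j = i then t * v k else 0
        with hβ
      have hβik : ∀ k, β i k = t * v k := fun k => by simp [hβ]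
      have hβjk : ∀ j k, j ≠ i → β j k = 0 := fun j k hj => by simp [hβ, hj]
      have hAβ : ∀ j k, (A * β) j k = A j i * (t * v k) := by
        intro j k
        simp only [Matrix.mul_apply, hβ, Matrix.of_apply, mul_ite, mul_zero]
        simp
      have hq : ∑ j : Fin n, ∑ k : Fin p, ((A * β) j k) ^ 2 = t ^ 2 * S := by
        have hrow : ∀ j, ∑ k : Fin p, ((A * β) j k) ^ 2
            = (A j i) ^ 2 * (t ^ 2 * ∑ k : Fin p, (v k) ^ 2) := by
          intro j
          simp only [hAβ, mul_pow, Finset.mul_sum]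
        rw [Finset.sum_congr rfl fun j _ => hrow j, ← Finset.sum_mul, hS]
        ring
      have hlin : ∑ i' : Fin m, ∑ k : Fin p, (Aᵀ * Z) i' k * β i' k = t * N ^ 2 := by
        rw [hNsq]
        rw [Finset.sum_eq_single i]
        · rw [Finset.mul_sum]
          refine Finset.sum_congr rfl fun k _ => ?_
          rw [hβik k]
          show v k * (t * v k) = t * v k ^ 2
          ring
        · intro b _ hb
          refine Finset.sum_eq_zero fun k _ => ?_
          rw [hβjk b k hb, mul_zero]
        · simp
      have hpen : ∑ i' : Fin m, Real.sqrt (∑ k : Fin p, (β i' k) ^ 2) = t * N := by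
        rw [Finset.sum_eq_single i]
        · have h2 : ∀ k : Fin p, (β i k) ^ 2 = t ^ 2 * (v k) ^ 2 := fun k => by
            rw [hβik k]; ring
          rw [Finset.sum_congr rfl fun k _ => h2 k, ← Finset.mul_sum,
            Real.sqrt_mul (by positivity), Real.sqrt_sq ht.le, hN]
        · intro b _ hb
          have : ∀ k : Fin p, (β b k) ^ 2 = 0 := fun k => by rw [hβjk b k hb]; ring
          rw [Finset.sum_congr rfl fun k _ => this k]
          simp
        · simp
      have hmb := hmin β
      have hg := hgap β
      rw [hq, hlin, hpen] at hg
      have h2 : 0 ≤ (1/2) * (t^2 * S) - t * N ^ 2 + lam * (t * N) := by linarith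
      nlinarith
    by_contra hcon
    push_neg at hcon
    have hNpos : 0 < N := lt_of_le_of_lt hlam hcon
    have hpos : 0 < N ^ 2 - lam * N := by nlinarith
    have hk := key ((N ^ 2 - lam * N) / (S + 1)) (by positivity)
    have hfrac : (N ^ 2 - lam * N) / (S + 1) * S < (N ^ 2 - lam * N) * 2 := by
      rw [div_mul_eq_mul_div, div_lt_iff₀ (by positivity)]
      nlinarith
    nlinarith
  · intro h β
    have hg := hgap β
    have hrow : ∀ i : Fin m, ∑ k : Fin p, (Aᵀ * Z) i k * β i k
        ≤ lam * Real.sqrt (∑ k : Fin p, (β i k) ^ 2) := by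
      intro i
      calc ∑ k : Fin p, (Aᵀ * Z) i k * β i k
          ≤ Real.sqrt (∑ k : Fin p, ((Aᵀ * Z) i k) ^ 2)
            * Real.sqrt (∑ k : Fin p, (β i k) ^ 2) :=
            Real.sum_mul_le_sqrt_mul_sqrt _ _ _
        _ ≤ lam * Real.sqrt (∑ k : Fin p, (β i k) ^ 2) :=
            mul_le_mul_of_nonneg_right (h i) (Real.sqrt_nonneg _)
    have hsum : ∑ i : Fin m, ∑ k : Fin p, (Aᵀ * Z) i k * β i k
        ≤ lam * ∑ i : Fin m, Real.sqrt (∑ k : Fin p, (β i k) ^ 2) := by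
      rw [Finset.mul_sum]
      exact Finset.sum_le_sum fun i _ => hrow i
    have hq0 : 0 ≤ ∑ j : Fin n, ∑ k : Fin p, ((A * β) j k) ^ 2 := by positivity
    linarith
end

section
/- Let γ > 0, λ ≥ 0 and S ∈ ℝ^p with the Euclidean norm ‖·‖ and inner product ⟨·,·⟩. The function b ↦ (γ/2)‖b‖² − ⟨S, b⟩ + λ‖b‖ on ℝ^p has a unique global minimizer, which equals (1/γ)·(1 − λ/‖S‖)₊ · S when S ≠ 0, and equals 0 when S = 0, where (x)₊ = max(x, 0). -/
open scoped RealInnerProductSpace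

/-- block soft-thresholding.  For `γ > 0`, `λ ≥ 0` and `S ∈ ℝᵖ`, the
function `b ↦ (γ/2)‖b‖² − ⟨S, b⟩ + λ‖b‖` has a unique global minimizer, equal to
`(1/γ)(1 − λ/‖S‖)₊ S` if `S ≠ 0` and to `0` if `S = 0`. -/
theorem statement7 (p : ℕ) (γ lam : ℝ) (hγ : 0 < γ) (hlam : 0 ≤ lam)
    (S : EuclideanSpace ℝ (Fin p))
    (f : EuclideanSpace ℝ (Fin p) → ℝ)
    (hf : ∀ b, f b = γ / 2 * ‖b‖ ^ 2 - ⟪S, b⟫ + lam * ‖b‖)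
    (bstar : EuclideanSpace ℝ (Fin p))
    (hbstar0 : S = 0 → bstar = 0)
    (hbstar1 : S ≠ 0 → bstar = ((1 / γ) * max (1 - lam / ‖S‖) 0) • S) :
    (∀ b, f bstar ≤ f b) ∧ ∀ b, (∀ b', f b ≤ f b') → b = bstar := by
  by_cases hS : ‖S‖ ≤ lam
  · -- bstar = 0 case
    have hb0 : bstar = 0 := by
      by_cases h0 : S = 0
      · exact hbstar0 h0
      · have hN : 0 < ‖S‖ := norm_pos_iff.mpr h0
        have hle : 1 - lam / ‖S‖ ≤ 0 := by
          rw [sub_nonpos]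
          exact (one_le_div hN).mpr hS
        rw [hbstar1 h0, max_eq_right hle, mul_zero, zero_smul]
    have hf0 : f bstar = 0 := by rw [hb0, hf]; simp
    have hge : ∀ b, γ / 2 * ‖b‖ ^ 2 ≤ f b := by
      intro b
      rw [hf]
      have h1 : ⟪S, b⟫ ≤ ‖S‖ * ‖b‖ := real_inner_le_norm S b
      nlinarith [norm_nonneg b]
    constructor
    · intro b
      rw [hf0]
      have := hge b
      nlinarith [sq_nonneg ‖b‖]
    · intro b hb
      have h1 : f b ≤ 0 := hf0 ▸ hb bstar
      have h2 := hge b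
      have h4 : ‖b‖ ^ 2 ≤ 0 := by nlinarith [sq_nonneg ‖b‖]
      have hn : ‖b‖ = 0 := by
        have := pow_eq_zero_iff (n := 2) (by norm_num) |>.mp (le_antisymm h4 (sq_nonneg _))
        exact this
      rw [hb0]
      exact norm_eq_zero.mp hn
  · push_neg at hS
    have hN : 0 < ‖S‖ := lt_of_le_of_lt hlam hS
    have h0 : S ≠ 0 := norm_pos_iff.mp hN
    have hmax : max (1 - lam / ‖S‖) 0 = 1 - lam / ‖S‖ := by
      apply max_eq_left
      rw [sub_nonneg]
      exact (div_le_one hN).mpr hS.le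
    set c : ℝ := (1 / γ) * max (1 - lam / ‖S‖) 0 with hc
    set t : ℝ := (‖S‖ - lam) / γ with htdef
    have ht : 0 < t := div_pos (by linarith) hγ
    have hcS : c * ‖S‖ = t := by
      rw [hc, hmax, htdef]
      field_simp
    have hcnn : 0 ≤ c := by
      rw [hc, hmax]
      have : 0 ≤ 1 - lam / ‖S‖ := by
        rw [sub_nonneg]; exact (div_le_one hN).mpr hS.le
      positivity
    have hbs : bstar = c • S := hbstar1 h0
    have hnb : ‖bstar‖ = t := by
      rw [hbs, norm_smul, Real.norm_eq_abs, abs_of_nonneg hcnn, hcS]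
    have hib : ⟪S, bstar⟫ = t * ‖S‖ := by
      rw [hbs, real_inner_smul_right, real_inner_self_eq_norm_mul_norm]
      rw [show c * (‖S‖ * ‖S‖) = (c * ‖S‖) * ‖S‖ by ring, hcS]
    have hfb : f bstar = γ / 2 * t ^ 2 - t * ‖S‖ + lam * t := by
      rw [hf, hnb, hib]
    have hgt : γ * t = ‖S‖ - lam := by
      rw [htdef]; field_simp
    have key : ∀ b, f b = f bstar + γ / 2 * (‖b‖ - t) ^ 2 + (‖S‖ * ‖b‖ - ⟪S, b⟫) := by
      intro b
      rw [hf, hfb]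
      linear_combination (‖b‖ - t) * hgt
    have hA : ∀ b : EuclideanSpace ℝ (Fin p), 0 ≤ ‖S‖ * ‖b‖ - ⟪S, b⟫ := by
      intro b
      have := real_inner_le_norm S b
      linarith
    constructor
    · intro b
      rw [key b]
      have := hA b
      nlinarith [sq_nonneg (‖b‖ - t)]
    · intro b hb
      have h1 : f b ≤ f bstar := hb bstar
      rw [key b] at h1
      have h2 := hA b
      have hsq : (‖b‖ - t) ^ 2 = 0 ∧ ‖S‖ * ‖b‖ - ⟪S, b⟫ = 0 := by
        constructor <;> nlinarith [sq_nonneg (‖b‖ - t)]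
      have hnbt : ‖b‖ = t := by
        have := pow_eq_zero_iff (n := 2) (by norm_num) |>.mp hsq.1
        linarith [sub_eq_zero.mp this]
      have hin : ⟪S, b⟫ = ‖S‖ * ‖b‖ := by linarith [hsq.2]
      have heq : ‖b‖ • S = ‖S‖ • b := inner_eq_norm_mul_iff_real.mp hin
      have hbval : b = (‖S‖⁻¹ * ‖b‖) • S := by
        have h2 : (‖S‖)⁻¹ • (‖S‖ • b) = (‖S‖)⁻¹ • (‖b‖ • S) := by rw [heq]
        rw [smul_smul, smul_smul, inv_mul_cancel₀ hN.ne', one_smul] at h2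
        exact h2
      rw [hbs, hbval, hnbt, ← hcS]
      congr 1
      field_simp
end

section
/- Let W be an n×p random matrix whose entries are independent, centered, square-integrable real random variables with common variance σ². Then for all 1 ≤ i ≤ j ≤ n−1 and all k, l ∈ {1,…,p}: E[ (X̄ᵀW)_{i,k} · (X̄ᵀW)_{j,l} ] = δ_{kl} · d_i d_j · ( i(n−j)/n ) · σ², where δ_{kl} = 1 if k = l and 0 otherwise. -/
open Matrix BigOperators MeasureTheory ProbabilityTheory

lemma colsum (n m : ℕ) (hm : m + 1 ≤ n) :
    ∑ a : Fin n, (if m < (a:ℕ) then (1:ℝ) else 0) = (n:ℝ) - (m+1) := by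
  rw [Fin.sum_univ_eq_sum_range (fun a => if m < a then (1:ℝ) else 0)]
  rw [Finset.sum_boole]
  have h : (Finset.range n).filter (fun a => m < a) = Finset.Ico (m+1) n := by
    ext x; simp [Finset.mem_filter, Finset.mem_Ico]; omega
  rw [h, Nat.card_Ico, Nat.cast_sub hm]
  push_cast; ring

lemma hXbar_eq (n : ℕ) (hn : 2 ≤ n) (d : Fin (n-1) → ℝ) (j : Fin (n-1)) (a : Fin n) :
    Xbar n d a j
      = d j * ((if (j:ℕ) < (a:ℕ) then (1:ℝ) else 0) - ((n:ℝ) - ((j:ℕ)+1))/n) := by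
  have hj : (j:ℕ) + 1 ≤ n := by have := j.isLt; omega
  simp only [Xbar, centerCols, designX]
  have h1 : (∑ k : Fin n, if (j:ℕ) < (k:ℕ) then d j else 0)
      = d j * ((n:ℝ) - ((j:ℕ)+1)) := by
    have : ∀ k : Fin n, (if (j:ℕ) < (k:ℕ) then d j else 0)
        = d j * (if (j:ℕ) < (k:ℕ) then (1:ℝ) else 0) := by
      intro k; split_ifs <;> ring
    simp_rw [this]
    rw [← Finset.mul_sum, colsum n j hj]
  rw [h1]
  split_ifs <;> ring

lemma keySum (n : ℕ) (hn : 2 ≤ n) (d : Fin (n-1) → ℝ) (i j : Fin (n-1))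
    (hij : (i:ℕ) ≤ (j:ℕ)) :
    ∑ a : Fin n, Xbar n d a i * Xbar n d a j
      = d i * d j * ((((i:ℕ) + 1 : ℝ)) * ((n : ℝ) - ((j : ℕ) + 1)) / n) := by
  have hn0 : (n:ℝ) ≠ 0 := by positivity
  have hi : (i:ℕ) + 1 ≤ n := by have := i.isLt; omega
  have hj : (j:ℕ) + 1 ≤ n := by have := j.isLt; omega
  set ci : ℝ := ((n:ℝ) - ((i:ℕ)+1))/n with hci
  set cj : ℝ := ((n:ℝ) - ((j:ℕ)+1))/n with hcj
  have hprod : ∀ a : Fin n,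
      (if (i:ℕ) < (a:ℕ) then (1:ℝ) else 0) * (if (j:ℕ) < (a:ℕ) then (1:ℝ) else 0)
        = (if (j:ℕ) < (a:ℕ) then (1:ℝ) else 0) := by
    intro a
    by_cases h : (j:ℕ) < (a:ℕ)
    · simp [h, lt_of_le_of_lt hij h]
    · simp [h]
  have expand : ∀ a : Fin n,
      Xbar n d a i * Xbar n d a j
        = d i * d j * ((if (j:ℕ) < (a:ℕ) then (1:ℝ) else 0)
            - cj * (if (i:ℕ) < (a:ℕ) then (1:ℝ) else 0)
            - ci * (if (j:ℕ) < (a:ℕ) then (1:ℝ) else 0) + ci * cj) := by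
    intro a
    rw [hXbar_eq n hn d i a, hXbar_eq n hn d j a]
    rw [← hci, ← hcj]
    linear_combination (d i * d j) * hprod a
  simp_rw [expand]
  rw [← Finset.mul_sum]
  have hs1 := colsum n i hi
  have hs2 := colsum n j hj
  have : ∑ a : Fin n, ((if (j:ℕ) < (a:ℕ) then (1:ℝ) else 0)
            - cj * (if (i:ℕ) < (a:ℕ) then (1:ℝ) else 0)
            - ci * (if (j:ℕ) < (a:ℕ) then (1:ℝ) else 0) + ci * cj)
      = ((n:ℝ) - ((j:ℕ)+1)) - cj * ((n:ℝ) - ((i:ℕ)+1)) - ci * ((n:ℝ) - ((j:ℕ)+1))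
          + n * (ci * cj) := by
    rw [Finset.sum_add_distrib, Finset.sum_sub_distrib, Finset.sum_sub_distrib,
      ← Finset.mul_sum, ← Finset.mul_sum, hs1, hs2, Finset.sum_const, Finset.card_univ,
      Fintype.card_fin, nsmul_eq_mul]
  rw [this, hci, hcj]
  field_simp
  ring

/-- If `W` is an `n × p` random matrix with independent, centered,
square-integrable entries of common variance `σ²`, then for `1 ≤ i ≤ j ≤ n−1` and all
columns `k, l`, `E[(X̄ᵀW)_{i,k}(X̄ᵀW)_{j,l}] = δ_{kl} dᵢ dⱼ (i(n−j)/n) σ²` (1-based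
indices `i ↦ (i:ℕ)+1`, `j ↦ (j:ℕ)+1`). -/
theorem statement9 (n : ℕ) (hn : 2 ≤ n) (d : Fin (n-1) → ℝ) (hd : ∀ j, 0 < d j)
    (p : ℕ) (σ : ℝ)
    {Ω : Type*} [MeasurableSpace Ω] (μ : Measure Ω) [IsProbabilityMeasure μ]
    (W : Fin n × Fin p → Ω → ℝ)
    (hmeas : ∀ q, Measurable (W q))
    (hindep : iIndepFun W μ)
    (hL2 : ∀ q, MemLp (W q) 2 μ)
    (hcent : ∀ q, ∫ ω, W q ω ∂μ = 0)
    (hvar : ∀ q, ∫ ω, (W q ω) ^ 2 ∂μ = σ ^ 2) :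
    ∀ i j : Fin (n-1), (i : ℕ) ≤ (j : ℕ) → ∀ k l : Fin p,
      ∫ ω, (∑ a : Fin n, Xbar n d a i * W (a, k) ω)
          * (∑ a : Fin n, Xbar n d a j * W (a, l) ω) ∂μ =
        (if k = l then (1 : ℝ) else 0)
          * (d i * d j * ((((i : ℕ) + 1 : ℝ)) * ((n : ℝ) - ((j : ℕ) + 1)) / n) * σ ^ 2) := by
  intro i j hij k l
  have hint2 : ∀ q q' : Fin n × Fin p, Integrable (fun ω => W q ω * W q' ω) μ := by
    intro q q'
    rw [← memLp_one_iff_integrable]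
    exact MemLp.smul (r := 1) (hL2 q') (hL2 q)
  have hE : ∀ q q' : Fin n × Fin p,
      ∫ ω, W q ω * W q' ω ∂μ = if q = q' then σ^2 else 0 := by
    intro q q'
    by_cases h : q = q'
    · subst h
      rw [if_pos rfl, ← hvar q]
      exact integral_congr_ae (Filter.Eventually.of_forall fun ω => (sq (W q ω)).symm)
    · rw [if_neg h]
      have hi : IndepFun (W q) (W q') μ := hindep.indepFun h
      have := hi.integral_mul_eq_mul_integral (hmeas q).aestronglyMeasurable (hmeas q').aestronglyMeasurable
      calc ∫ ω, W q ω * W q' ω ∂μ = ∫ ω, (W q * W q') ω ∂μ := rfl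
        _ = (∫ ω, W q ω ∂μ) * ∫ ω, W q' ω ∂μ := this
        _ = 0 := by rw [hcent q, zero_mul]
  have hexp : (fun ω => (∑ a : Fin n, Xbar n d a i * W (a,k) ω)
        * (∑ a : Fin n, Xbar n d a j * W (a,l) ω))
      = fun ω => ∑ a : Fin n, ∑ b : Fin n,
          (Xbar n d a i * Xbar n d b j) * (W (a,k) ω * W (b,l) ω) := by
    funext ω
    rw [Finset.sum_mul_sum]
    exact Finset.sum_congr rfl fun a _ => Finset.sum_congr rfl fun b _ => by ring
  rw [hexp, integral_finset_sum _
    (fun a _ => integrable_finset_sum _ (fun b _ => (hint2 (a,k) (b,l)).const_mul _))]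
  have hconv : ∀ a : Fin n,
      ∫ ω, ∑ b : Fin n, (Xbar n d a i * Xbar n d b j) * (W (a,k) ω * W (b,l) ω) ∂μ
        = ∑ b : Fin n, (Xbar n d a i * Xbar n d b j)
            * (if ((a,k) : Fin n × Fin p) = (b,l) then σ^2 else 0) := by
    intro a
    rw [integral_finset_sum _ (fun b _ => (hint2 (a,k) (b,l)).const_mul _)]
    exact Finset.sum_congr rfl fun b _ => by rw [MeasureTheory.integral_const_mul, hE]
  simp_rw [hconv]
  by_cases hkl : k = l
  · subst hkl
    rw [if_pos rfl, one_mul]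
    have : ∀ a b : Fin n, (((a,k) : Fin n × Fin p) = (b,k)) ↔ a = b := by
      intro a b; simp [Prod.ext_iff]
    simp_rw [this]
    have h2 : ∀ a : Fin n, ∑ b : Fin n, (Xbar n d a i * Xbar n d b j)
        * (if a = b then σ^2 else 0) = Xbar n d a i * Xbar n d a j * σ^2 := by
      intro a
      rw [Finset.sum_eq_single a]
      · simp
      · intro b _ hb; simp [Ne.symm hb]
      · simp
    simp_rw [h2]
    rw [← Finset.sum_mul, keySum n hn d i j hij]
  · rw [if_neg hkl, zero_mul]
    have : ∀ a b : Fin n, (((a,k) : Fin n × Fin p) = (b,l)) = False := by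
      intro a b; simp [Prod.ext_iff, hkl]
    simp [this]
end

section
/- Fix u ∈ {1,…,n−1}, real numbers β*_1,…,β*_p, and let β* ∈ ℝ^{(n−1)×p} have all rows zero except row u, whose entries are β*_1,…,β*_p. Let W be an n×p random matrix whose entries are independent, centered, square-integrable real random variables with common variance σ², and set Ȳ = X̄β* + W. Then for every i ∈ {1,…,n−1}: E‖(X̄ᵀȲ)_{i,·}‖² = p · β̄_p² · d_i² d_u² · (min(i,u))² (n − max(i,u))² / n² + p · d_i² · ( i(n−i)/n ) · σ², where β̄_p² = (1/p) Σ_{j=1}^{p} (β*_j)². -/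
open Matrix BigOperators MeasureTheory ProbabilityTheory

lemma aux_count (n m : ℕ) (r : ℝ) :
    ∑ a : Fin n, (if m ≤ (a:ℕ) then r else 0) = ((n - m : ℕ) : ℝ) * r := by
  rw [Fin.sum_univ_eq_sum_range (fun a => if m ≤ a then r else 0) n, ← Finset.sum_filter]
  have h : (Finset.range n).filter (fun a => m ≤ a) = Finset.Ico m n := by
    ext a; simp [Finset.mem_filter, Finset.mem_range, Finset.mem_Ico]; omega
  rw [h, Finset.sum_const, Nat.card_Ico, nsmul_eq_mul]

lemma aux_S1 (n : ℕ) (d : Fin (n-1) → ℝ) (j : Fin (n-1)) :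
    ∑ a : Fin n, designX n d a j = ((n - ((j:ℕ)+1) : ℕ) : ℝ) * d j := by
  have : ∀ a : Fin n, designX n d a j = if (j:ℕ)+1 ≤ (a:ℕ) then d j else 0 := by
    intro a; simp only [designX, Nat.lt_iff_add_one_le]
  rw [Finset.sum_congr rfl (fun a _ => this a), aux_count]

lemma aux_S2 (n : ℕ) (d : Fin (n-1) → ℝ) (j l : Fin (n-1)) :
    ∑ a : Fin n, designX n d a j * designX n d a l
      = ((n - (max (j:ℕ) (l:ℕ) + 1) : ℕ) : ℝ) * (d j * d l) := by
  have : ∀ a : Fin n, designX n d a j * designX n d a l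
      = if max (j:ℕ) (l:ℕ) + 1 ≤ (a:ℕ) then d j * d l else 0 := by
    intro a; simp only [designX]
    split_ifs <;> (first | ring1 | (exfalso; omega))
  rw [Finset.sum_congr rfl (fun a _ => this a), aux_count]

lemma aux_gram (n : ℕ) (hn : 0 < n) (d : Fin (n-1) → ℝ) (j l : Fin (n-1)) :
    ∑ a : Fin n, Xbar n d a j * Xbar n d a l
      = (∑ a : Fin n, designX n d a j * designX n d a l)
        - (∑ a : Fin n, designX n d a j) * (∑ a : Fin n, designX n d a l) / n := by
  have hne : (n:ℝ) ≠ 0 := Nat.cast_ne_zero.mpr hn.ne'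
  simp only [Xbar, centerCols]
  set Tj := ∑ a : Fin n, designX n d a j with hTj
  set Tl := ∑ a : Fin n, designX n d a l with hTl
  have e : ∀ a : Fin n, (designX n d a j - Tj/n) * (designX n d a l - Tl/n)
      = designX n d a j * designX n d a l - (Tl/n) * designX n d a j
        - (Tj/n) * designX n d a l + (Tj/n) * (Tl/n) := fun a => by ring
  rw [Finset.sum_congr rfl (fun a _ => e a)]
  rw [Finset.sum_add_distrib, Finset.sum_sub_distrib, Finset.sum_sub_distrib,
    ← Finset.mul_sum, ← Finset.mul_sum, Finset.sum_const, Finset.card_univ,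
    Fintype.card_fin, nsmul_eq_mul]
  field_simp
  ring

lemma stepA {Ω : Type*} [MeasurableSpace Ω] (μ : Measure Ω) [IsProbabilityMeasure μ]
    (n p : ℕ) (W : Fin n × Fin p → Ω → ℝ) (hmeas : ∀ q, Measurable (W q))
    (hindep : iIndepFun W μ) (hL2 : ∀ q, MemLp (W q) 2 μ)
    (hcent : ∀ q, ∫ ω, W q ω ∂μ = 0) (σ : ℝ) (hvar : ∀ q, ∫ ω, (W q ω)^2 ∂μ = σ^2)
    (x : Fin n → ℝ) (c : Fin p → ℝ) :
    ∫ ω, (∑ k : Fin p, (c k + ∑ a : Fin n, x a * W (a,k) ω)^2) ∂μ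
      = (∑ k : Fin p, (c k)^2) + (p : ℝ) * (∑ a : Fin n, (x a)^2) * σ^2 := by
  have intW : ∀ q, Integrable (W q) μ := fun q => (hL2 q).integrable one_le_two
  have intWW : ∀ q q', Integrable (fun ω => W q ω * W q' ω) μ := by
    intro q q'
    by_cases h : q = q'
    · subst h; simpa [pow_two] using (hL2 q).integrable_sq
    · exact (hindep.indepFun h).integrable_mul (intW q) (intW q')
  have hWW : ∀ q q', q ≠ q' → ∫ ω, W q ω * W q' ω ∂μ = 0 := by
    intro q q' h
    have := (hindep.indepFun h).integral_mul_eq_mul_integral (hmeas q).aestronglyMeasurable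
      (hmeas q').aestronglyMeasurable
    simp only [Pi.mul_apply] at this
    rw [show (fun ω => W q ω * W q' ω) = W q * W q' from rfl]
    exact this.trans (by rw [hcent q, hcent q', mul_zero])
  have hpt : ∀ ω, (∑ k : Fin p, (c k + ∑ a : Fin n, x a * W (a,k) ω)^2)
      = ∑ k : Fin p, ((c k)^2 + (∑ a : Fin n, (2 * c k * x a) * W (a,k) ω)
          + ∑ a : Fin n, ∑ a' : Fin n, (x a * x a') * (W (a,k) ω * W (a',k) ω)) := by
    intro ω
    refine Finset.sum_congr rfl fun k _ => ?_
    have e1 : (c k + ∑ a : Fin n, x a * W (a,k) ω)^2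
        = (c k)^2 + 2 * c k * (∑ a : Fin n, x a * W (a,k) ω)
          + (∑ a : Fin n, x a * W (a,k) ω) * (∑ a : Fin n, x a * W (a,k) ω) := by ring
    rw [e1, Finset.mul_sum, Finset.sum_mul_sum]
    congr 1
    · congr 1
      exact Finset.sum_congr rfl fun a _ => by ring
    · exact Finset.sum_congr rfl fun a _ => Finset.sum_congr rfl fun a' _ => by ring
  simp only [hpt]
  have intLin : ∀ (k : Fin p), Integrable (fun ω => ∑ a : Fin n, (2 * c k * x a) * W (a,k) ω) μ :=
    fun k => integrable_finset_sum _ (fun a _ => (intW (a,k)).const_mul _)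
  have intQuad : ∀ (k : Fin p), Integrable
      (fun ω => ∑ a : Fin n, ∑ a' : Fin n, (x a * x a') * (W (a,k) ω * W (a',k) ω)) μ :=
    fun k => integrable_finset_sum _ (fun a _ => integrable_finset_sum _
      (fun a' _ => (intWW (a,k) (a',k)).const_mul _))
  have intTerm : ∀ (k : Fin p), Integrable (fun ω => (c k)^2
      + (∑ a : Fin n, (2 * c k * x a) * W (a,k) ω)
      + ∑ a : Fin n, ∑ a' : Fin n, (x a * x a') * (W (a,k) ω * W (a',k) ω)) μ :=
    fun k => (((integrable_const _).add (intLin k)).add (intQuad k))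
  rw [integral_finset_sum _ (fun k _ => intTerm k)]
  have hk : ∀ k : Fin p, (∫ ω, ((c k)^2 + (∑ a : Fin n, (2 * c k * x a) * W (a,k) ω)
      + ∑ a : Fin n, ∑ a' : Fin n, (x a * x a') * (W (a,k) ω * W (a',k) ω)) ∂μ)
      = (c k)^2 + (∑ a : Fin n, (x a)^2) * σ^2 := by
    intro k
    have hA : Integrable (fun ω => (c k)^2 + ∑ a : Fin n, (2 * c k * x a) * W (a,k) ω) μ :=
      (integrable_const _).add (intLin k)
    rw [integral_add hA (intQuad k),
      integral_add (integrable_const ((c k)^2)) (intLin k), integral_const]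
    simp only [probReal_univ, measure_univ, ENNReal.toReal_one, smul_eq_mul, one_mul]
    have h1 : (∫ ω, (∑ a : Fin n, (2 * c k * x a) * W (a,k) ω) ∂μ) = 0 := by
      rw [integral_finset_sum _ (fun a _ => (intW (a,k)).const_mul _)]
      simp only [MeasureTheory.integral_const_mul]
      simp [hcent]
    have h2 : (∫ ω, (∑ a : Fin n, ∑ a' : Fin n,
        (x a * x a') * (W (a,k) ω * W (a',k) ω)) ∂μ)
        = (∑ a : Fin n, (x a)^2) * σ^2 := by
      rw [integral_finset_sum _ (fun a _ => integrable_finset_sum _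
        (fun a' _ => (intWW (a,k) (a',k)).const_mul _))]
      have hinner : ∀ a : Fin n, (∫ ω, (∑ a' : Fin n,
          (x a * x a') * (W (a,k) ω * W (a',k) ω)) ∂μ) = (x a)^2 * σ^2 := by
        intro a
        rw [integral_finset_sum _ (fun a' _ => (intWW (a,k) (a',k)).const_mul _)]
        simp only [MeasureTheory.integral_const_mul]
        rw [Finset.sum_eq_single a]
        · have : (∫ ω, W (a,k) ω * W (a,k) ω ∂μ) = σ^2 := by
            rw [show (fun ω => W (a,k) ω * W (a,k) ω) = fun ω => (W (a,k) ω)^2 from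
              funext fun ω => (sq _).symm]
            exact hvar (a,k)
          rw [this]; ring
        · intro a' _ ha'
          rw [hWW (a,k) (a',k) (by simp [Prod.ext_iff, (ha'.symm : a ≠ a')] ), mul_zero]
        · intro h; exact absurd (Finset.mem_univ a) h
      rw [Finset.sum_congr rfl (fun a _ => hinner a), ← Finset.sum_mul]
    rw [h1, h2, add_zero]
  rw [Finset.sum_congr rfl (fun k _ => hk k), Finset.sum_add_distrib,
    Finset.sum_const, Finset.card_univ, Fintype.card_fin, nsmul_eq_mul]
  ring

lemma aux_gram_val (n : ℕ) (hn : 2 ≤ n) (d : Fin (n-1) → ℝ) (j l : Fin (n-1)) :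
    ∑ a : Fin n, Xbar n d a j * Xbar n d a l
      = d j * d l * ((min ((j:ℕ)+1) ((l:ℕ)+1) : ℕ) : ℝ)
          * ((n:ℝ) - ((max ((j:ℕ)+1) ((l:ℕ)+1) : ℕ) : ℝ)) / n := by
  have hj : (j:ℕ) + 1 ≤ n := by have := j.isLt; omega
  have hl : (l:ℕ) + 1 ≤ n := by have := l.isLt; omega
  have hm : max (j:ℕ) (l:ℕ) + 1 ≤ n := by omega
  have hne : (n:ℝ) ≠ 0 := Nat.cast_ne_zero.mpr (by omega)
  rw [aux_gram n (by omega) d j l, aux_S2, aux_S1 n d j, aux_S1 n d l,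
    Nat.cast_sub hm, Nat.cast_sub hj, Nat.cast_sub hl]
  rcases le_total (j:ℕ) (l:ℕ) with h | h
  · have h1 : min ((j:ℕ)+1) ((l:ℕ)+1) = (j:ℕ)+1 := by omega
    have h2 : max ((j:ℕ)+1) ((l:ℕ)+1) = (l:ℕ)+1 := by omega
    have h3 : max (j:ℕ) (l:ℕ) = (l:ℕ) := by omega
    rw [h1, h2, h3]
    push_cast
    field_simp
    ring
  · have h1 : min ((j:ℕ)+1) ((l:ℕ)+1) = (l:ℕ)+1 := by omega
    have h2 : max ((j:ℕ)+1) ((l:ℕ)+1) = (j:ℕ)+1 := by omega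
    have h3 : max (j:ℕ) (l:ℕ) = (j:ℕ) := by omega
    rw [h1, h2, h3]
    push_cast
    field_simp
    ring

lemma aux_sq_val (n : ℕ) (hn : 2 ≤ n) (d : Fin (n-1) → ℝ) (i : Fin (n-1)) :
    ∑ a : Fin n, (Xbar n d a i)^2
      = (d i)^2 * ((((i:ℕ)+1 : ℝ)) * ((n:ℝ) - ((i:ℕ)+1))) / n := by
  have h := aux_gram_val n hn d i i
  simp only [min_self, max_self] at h
  calc ∑ a : Fin n, (Xbar n d a i)^2
      = ∑ a : Fin n, Xbar n d a i * Xbar n d a i :=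
        Finset.sum_congr rfl fun a _ => sq (Xbar n d a i)
    _ = d i * d i * (((i:ℕ)+1 : ℕ) : ℝ) * ((n:ℝ) - (((i:ℕ)+1 : ℕ) : ℝ)) / n := h
    _ = (d i)^2 * ((((i:ℕ)+1 : ℝ)) * ((n:ℝ) - ((i:ℕ)+1))) / n := by push_cast; ring

/-- Single shared change-point model: `β*` has all rows zero except row
`u`, with entries `b 1, …, b p`; `W` has independent, centered, square-integrable entries
of common variance `σ²`; and `Ȳ = X̄β* + W`.  Then for every `i`,
`E‖(X̄ᵀȲ)_{i,·}‖² = p β̄ₚ² dᵢ² d_u² min(i,u)²(n − max(i,u))²/n² + p dᵢ² (i(n−i)/n) σ²`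
with `β̄ₚ² = (1/p) Σⱼ bⱼ²` (1-based indices `i ↦ (i:ℕ)+1`, `u ↦ (u:ℕ)+1`). -/
theorem statement10 (n : ℕ) (hn : 2 ≤ n) (d : Fin (n-1) → ℝ) (hd : ∀ j, 0 < d j)
    (p : ℕ) (hp : 1 ≤ p) (u : Fin (n-1)) (b : Fin p → ℝ) (σ : ℝ)
    (βstar : Matrix (Fin (n-1)) (Fin p) ℝ)
    (hβ : ∀ j k, βstar j k = if j = u then b k else 0)
    {Ω : Type*} [MeasurableSpace Ω] (μ : Measure Ω) [IsProbabilityMeasure μ]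
    (W : Fin n × Fin p → Ω → ℝ)
    (hmeas : ∀ q, Measurable (W q))
    (hindep : iIndepFun W μ)
    (hL2 : ∀ q, MemLp (W q) 2 μ)
    (hcent : ∀ q, ∫ ω, W q ω ∂μ = 0)
    (hvar : ∀ q, ∫ ω, (W q ω) ^ 2 ∂μ = σ ^ 2)
    (Ybar : Ω → Matrix (Fin n) (Fin p) ℝ)
    (hY : ∀ ω a k, Ybar ω a k = (Xbar n d * βstar) a k + W (a, k) ω) :
    ∀ i : Fin (n-1),
      ∫ ω, (∑ k : Fin p, (((Xbar n d)ᵀ * Ybar ω) i k) ^ 2) ∂μ =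
        (p : ℝ) * ((1 / (p : ℝ)) * ∑ j : Fin p, (b j) ^ 2) * (d i) ^ 2 * (d u) ^ 2
            * (((min ((i : ℕ) + 1) ((u : ℕ) + 1) : ℕ) : ℝ)) ^ 2
            * ((n : ℝ) - ((max ((i : ℕ) + 1) ((u : ℕ) + 1) : ℕ) : ℝ)) ^ 2 / (n : ℝ) ^ 2
          + (p : ℝ) * (d i) ^ 2 * ((((i : ℕ) + 1 : ℝ)) * ((n : ℝ) - ((i : ℕ) + 1)) / n)
            * σ ^ 2 := by
  intro i
  set G : ℝ := ∑ a : Fin n, Xbar n d a i * Xbar n d a u with hGdef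
  have hrow : ∀ ω (k : Fin p), ((Xbar n d)ᵀ * Ybar ω) i k
      = G * b k + ∑ a : Fin n, Xbar n d a i * W (a,k) ω := by
    intro ω k
    have hXβ : ∀ a : Fin n, (Xbar n d * βstar) a k = Xbar n d a u * b k := by
      intro a
      simp only [Matrix.mul_apply]
      rw [Finset.sum_congr rfl (fun j _ => by rw [hβ j k])]
      simp [mul_ite, Finset.sum_ite_eq', Finset.mem_univ]
    simp only [Matrix.mul_apply, Matrix.transpose_apply, hY, hXβ]
    calc ∑ a : Fin n, Xbar n d a i * (Xbar n d a u * b k + W (a,k) ω)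
        = ∑ a : Fin n, (Xbar n d a i * Xbar n d a u * b k + Xbar n d a i * W (a,k) ω) :=
          Finset.sum_congr rfl fun a _ => by ring
      _ = G * b k + ∑ a : Fin n, Xbar n d a i * W (a,k) ω := by
          rw [Finset.sum_add_distrib, ← Finset.sum_mul]
  have key := stepA μ n p W hmeas hindep hL2 hcent σ hvar
    (fun a => Xbar n d a i) (fun k => G * b k)
  simp only [hrow]
  rw [key]
  -- algebra
  have hGval : G = d i * d u * ((min ((i:ℕ)+1) ((u:ℕ)+1) : ℕ) : ℝ)
      * ((n:ℝ) - ((max ((i:ℕ)+1) ((u:ℕ)+1) : ℕ) : ℝ)) / n := aux_gram_val n hn d i u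
  have hxval : ∑ a : Fin n, (Xbar n d a i)^2
      = (d i)^2 * ((((i:ℕ)+1 : ℝ)) * ((n:ℝ) - ((i:ℕ)+1))) / n := aux_sq_val n hn d i
  have hb2 : ∑ k : Fin p, (G * b k)^2 = G^2 * ∑ k : Fin p, (b k)^2 := by
    rw [Finset.mul_sum]; exact Finset.sum_congr rfl fun k _ => by ring
  rw [hb2, hGval, hxval]
  have hp' : (p:ℝ) ≠ 0 := Nat.cast_ne_zero.mpr (by omega)
  have hn' : (n:ℝ) ≠ 0 := Nat.cast_ne_zero.mpr (by omega)
  field_simp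
end

section
/- Fix integers n ≥ 2 and u with n/2 ≤ u ≤ n−1, reals β̄² > 0 and σ² ≥ 0, and define, for i ∈ {1,…,n−1}, G_i = (i(n−i)/n) σ² + β̄² (min(i,u))² (n − max(i,u))² / n² (the unweighted case d_i = 1). Let α = u/n and, when 2u > n + 1, σ̃²_α = n β̄² (1 − α)² (α − 1/(2n)) / (α − 1/2 − 1/(2n)). Then: (i) if 2u ≤ n + 1, G_u > G_i for every i ≠ u; (ii) if 2u > n + 1 and σ² < σ̃²_α, then G_u > G_i for every i ≠ u; (iii) if 2u > n + 1 and σ² > σ̃²_α, then G_{u−1} > G_u, so u is not a maximizer of G. -/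
open BigOperators

set_option maxHeartbeats 1000000 in
/-- deterministic core of Theorem 1.  For `n ≥ 2`, `n/2 ≤ u ≤ n−1`
(1-based `u ↦ (u:ℕ)+1`), `β̄² > 0`, `σ² ≥ 0`, and
`Gᵢ = (i(n−i)/n)σ² + β̄² min(i,u)²(n−max(i,u))²/n²`, with `α = u/n` and
`σ̃²_α = n β̄² (1−α)²(α − 1/(2n))/(α − 1/2 − 1/(2n))`: (i) if `2u ≤ n+1` then `u` is the
unique maximizer of `G`; (ii) if `2u > n+1` and `σ² < σ̃²_α` then `u` is the unique
maximizer of `G`; (iii) if `2u > n+1` and `σ² > σ̃²_α` then `G_{u−1} > G_u`, so `u` is not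
a maximizer of `G`. -/
theorem statement14 (n : ℕ) (hn : 2 ≤ n) (u : Fin (n-1)) (hu : n ≤ 2 * ((u : ℕ) + 1))
    (betabar2 σ2 : ℝ) (hb2 : 0 < betabar2) (hσ2 : 0 ≤ σ2)
    (G : Fin (n-1) → ℝ)
    (hG : ∀ i, G i = ((((i : ℕ) + 1 : ℝ)) * ((n : ℝ) - ((i : ℕ) + 1)) / n) * σ2
      + betabar2 * (((min ((i : ℕ) + 1) ((u : ℕ) + 1) : ℕ) : ℝ)) ^ 2
        * ((n : ℝ) - ((max ((i : ℕ) + 1) ((u : ℕ) + 1) : ℕ) : ℝ)) ^ 2 / (n : ℝ) ^ 2)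
    (α : ℝ) (hα : α = ((u : ℕ) + 1 : ℝ) / n)
    (σt2 : ℝ)
    (hσt2 : σt2 = (n : ℝ) * betabar2 * (1 - α) ^ 2 * (α - 1 / (2 * n))
      / (α - 1 / 2 - 1 / (2 * n))) :
    (2 * ((u : ℕ) + 1) ≤ n + 1 → ∀ i, i ≠ u → G i < G u) ∧
    (n + 1 < 2 * ((u : ℕ) + 1) → σ2 < σt2 → ∀ i, i ≠ u → G i < G u) ∧
    (n + 1 < 2 * ((u : ℕ) + 1) → σt2 < σ2 →
      G u < G (⟨(u : ℕ) - 1, lt_of_le_of_lt (Nat.sub_le _ _) u.isLt⟩ : Fin (n-1)) ∧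
      ¬ (∀ i, G i ≤ G u)) := by
  have hu' : (u : ℕ) < n - 1 := u.isLt
  set N : ℝ := (n : ℝ) with hNdef
  have hN2 : (2:ℝ) ≤ N := by rw [hNdef]; exact_mod_cast hn
  have hN0 : (0:ℝ) < N := by linarith
  set U : ℝ := ((u : ℕ) : ℝ) + 1 with hUdef
  have hU1 : (1:ℝ) ≤ U := by
    have : (0:ℝ) ≤ ((u:ℕ):ℝ) := Nat.cast_nonneg _
    rw [hUdef]; linarith
  have hUn : U ≤ N - 1 := by
    have h1 : ((u : ℕ) : ℕ) + 1 ≤ n - 1 := by omega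
    have h2 : (((u : ℕ) : ℝ)) + 1 ≤ ((n - 1 : ℕ) : ℝ) := by exact_mod_cast h1
    have h3 : ((n - 1 : ℕ) : ℝ) = N - 1 := by
      rw [hNdef]; push_cast [Nat.cast_sub (by omega : 1 ≤ n)]; ring
    linarith [h2, h3.le, h3.ge]
  have hNU : N ≤ 2 * U := by
    have : (n : ℝ) ≤ (2 * ((u : ℕ) + 1) : ℕ) := by exact_mod_cast hu
    push_cast at this; linarith
  set C : ℝ := betabar2 * (N - U)^2 with hCdef
  have hNUpos : (0:ℝ) < N - U := by linarith
  have hC0 : 0 < C := by positivity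
  -- key lemma for i < u
  have keyL : ∀ i : Fin (n-1), (i : ℕ) < (u : ℕ) →
      0 < σ2 * N * (N - 2*U + 1) + C * (2*U - 1) → G i < G u := by
    intro i hi hcond
    set I : ℝ := ((i : ℕ) : ℝ) + 1 with hIdef
    have hI1 : (1:ℝ) ≤ I := by
      have : (0:ℝ) ≤ ((i:ℕ):ℝ) := Nat.cast_nonneg _
      rw [hIdef]; linarith
    have hIU : I + 1 ≤ U := by
      have : ((i : ℕ) : ℝ) + 1 ≤ ((u : ℕ) : ℝ) := by exact_mod_cast hi
      rw [hIdef, hUdef]; linarith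
    have hmin : min ((i : ℕ) + 1) ((u : ℕ) + 1) = (i : ℕ) + 1 := by omega
    have hmax : max ((i : ℕ) + 1) ((u : ℕ) + 1) = (u : ℕ) + 1 := by omega
    have hIpos : 0 < σ2 * N * (N - U - I) + C * (U + I) := by
      rcases le_or_gt (σ2 * N) C with h | h
      · nlinarith [mul_nonneg (mul_nonneg hσ2 hN0.le) (by linarith : (0:ℝ) ≤ N - U - 1),
          mul_nonneg (by linarith : (0:ℝ) ≤ I - 1) (by linarith : (0:ℝ) ≤ C - σ2 * N),
          mul_pos hC0 (by linarith : (0:ℝ) < U + 1)]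
      · nlinarith [mul_nonneg (by linarith : (0:ℝ) ≤ U - 1 - I) (by linarith : (0:ℝ) ≤ σ2 * N - C)]
    have hdiff : G u - G i = (U - I) * (σ2 * N * (N - U - I) + C * (U + I)) / N^2 := by
      rw [hG i, hG u, hmin, hmax, min_self, max_self]
      push_cast
      rw [hCdef, hUdef, hIdef]
      field_simp
      ring
    have : 0 < (U - I) * (σ2 * N * (N - U - I) + C * (U + I)) / N^2 :=
      div_pos (mul_pos (by linarith) hIpos) (by positivity)
    linarith [hdiff.ge, hdiff.le]
  -- key lemma for i > u (unconditional)
  have keyR : ∀ i : Fin (n-1), (u : ℕ) < (i : ℕ) → G i < G u := by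
    intro i hi
    set I : ℝ := ((i : ℕ) : ℝ) + 1 with hIdef
    have hI1 : (1:ℝ) ≤ I := by
      have : (0:ℝ) ≤ ((i:ℕ):ℝ) := Nat.cast_nonneg _
      rw [hIdef]; linarith
    have hUI : U + 1 ≤ I := by
      have : ((u : ℕ) : ℝ) + 1 ≤ ((i : ℕ) : ℝ) := by exact_mod_cast hi
      rw [hIdef, hUdef]; linarith
    have hIn : I ≤ N - 1 := by
      have h1 : ((i : ℕ) : ℕ) + 1 ≤ n - 1 := by omega
      have h2 : (((i : ℕ) : ℝ)) + 1 ≤ ((n - 1 : ℕ) : ℝ) := by exact_mod_cast h1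
      have h3 : ((n - 1 : ℕ) : ℝ) = N - 1 := by
        rw [hNdef]; push_cast [Nat.cast_sub (by omega : 1 ≤ n)]; ring
      rw [hIdef]; linarith [h2, h3.le, h3.ge]
    have hmin : min ((i : ℕ) + 1) ((u : ℕ) + 1) = (u : ℕ) + 1 := by omega
    have hmax : max ((i : ℕ) + 1) ((u : ℕ) + 1) = (i : ℕ) + 1 := by omega
    have hIpos : 0 < σ2 * N * (U + I - N) + betabar2 * U^2 * (2*N - U - I) := by
      have h1 : 0 < U + I - N := by linarith
      have h2 : 0 < 2*N - U - I := by linarith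
      have h3 : 0 < betabar2 * U^2 * (2*N - U - I) := by positivity
      nlinarith [mul_nonneg (mul_nonneg hσ2 hN0.le) h1.le]
    have hdiff : G u - G i =
        (I - U) * (σ2 * N * (U + I - N) + betabar2 * U^2 * (2*N - U - I)) / N^2 := by
      rw [hG i, hG u, hmin, hmax, min_self, max_self]
      push_cast
      rw [hUdef, hIdef]
      field_simp
      ring
    have : 0 < (I - U) * (σ2 * N * (U + I - N) + betabar2 * U^2 * (2*N - U - I)) / N^2 :=
      div_pos (mul_pos (by linarith) hIpos) (by positivity)
    linarith [hdiff.ge, hdiff.le]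
  have main : ∀ i : Fin (n-1), i ≠ u →
      0 < σ2 * N * (N - 2*U + 1) + C * (2*U - 1) → G i < G u := by
    intro i hi hcond
    rcases lt_trichotomy (i : ℕ) (u : ℕ) with h | h | h
    · exact keyL i h hcond
    · exact absurd (Fin.ext h) hi
    · exact keyR i h
  refine ⟨?_, ?_, ?_⟩
  · intro h2u i hi
    refine main i hi ?_
    have : (2 * ((u:ℕ) + 1) : ℝ) ≤ ((n + 1 : ℕ) : ℝ) := by exact_mod_cast h2u
    push_cast at this
    have h1 : (0:ℝ) ≤ N - 2*U + 1 := by rw [hUdef, hNdef]; linarith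
    nlinarith [mul_nonneg (mul_nonneg hσ2 hN0.le) h1, mul_pos hC0 (by linarith : (0:ℝ) < 2*U - 1)]
  · intro h2u hσlt i hi
    refine main i hi ?_
    have h2u' : ((n + 1 : ℕ) : ℝ) < (2 * ((u:ℕ) + 1) : ℕ) := by exact_mod_cast h2u
    push_cast at h2u'
    have hD : (0:ℝ) < 2*U - N - 1 := by
      have hn' : n + 2 ≤ 2 * ((u:ℕ)+1) := by omega
      have : ((n + 2 : ℕ) : ℝ) ≤ (2 * ((u:ℕ) + 1) : ℕ) := by exact_mod_cast hn'
      push_cast at this; rw [hUdef, hNdef]; linarith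
    have hDne : (2*U - N - 1) ≠ 0 := ne_of_gt hD
    have e1 : α - 1/2 - 1/(2*N) = (2*U - N - 1) / (2*N) := by
      rw [hα]; field_simp
    have hσt2' : σt2 * (N * (2*U - N - 1)) = C * (2*U - 1) := by
      rw [hσt2, e1, hα, hCdef]
      rw [div_mul_eq_mul_div, div_eq_iff (div_ne_zero hDne (by positivity))]
      field_simp
    have hlt : σ2 * (N * (2*U - N - 1)) < C * (2*U - 1) := by
      rw [← hσt2']
      exact mul_lt_mul_of_pos_right hσlt (by positivity)
    nlinarith [hlt]
  · intro h2u hσgt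
    have h2u' : ((n + 1 : ℕ) : ℝ) < (2 * ((u:ℕ) + 1) : ℕ) := by exact_mod_cast h2u
    push_cast at h2u'
    have hD : (0:ℝ) < 2*U - N - 1 := by
      have hn' : n + 2 ≤ 2 * ((u:ℕ)+1) := by omega
      have : ((n + 2 : ℕ) : ℝ) ≤ (2 * ((u:ℕ) + 1) : ℕ) := by exact_mod_cast hn'
      push_cast at this; rw [hUdef, hNdef]; linarith
    have hu1 : 1 ≤ (u : ℕ) := by omega
    have hDne : (2*U - N - 1) ≠ 0 := ne_of_gt hD
    have e1 : α - 1/2 - 1/(2*N) = (2*U - N - 1) / (2*N) := by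
      rw [hα]; field_simp
    have hσt2' : σt2 * (N * (2*U - N - 1)) = C * (2*U - 1) := by
      rw [hσt2, e1, hα, hCdef]
      rw [div_mul_eq_mul_div, div_eq_iff (div_ne_zero hDne (by positivity))]
      field_simp
    have hgt : C * (2*U - 1) < σ2 * (N * (2*U - N - 1)) := by
      rw [← hσt2']
      exact mul_lt_mul_of_pos_right hσgt (by positivity)
    set j : Fin (n-1) := (⟨(u : ℕ) - 1, lt_of_le_of_lt (Nat.sub_le _ _) u.isLt⟩ : Fin (n-1)) with hj
    have hjn : (j : ℕ) = (u : ℕ) - 1 := rfl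
    have hjv : ((j : ℕ) : ℝ) + 1 = U - 1 := by
      rw [hUdef]
      have h1 : (j : ℕ) + 1 = (u : ℕ) := by omega
      have h2 : ((j : ℕ) : ℝ) + 1 = ((u : ℕ) : ℝ) := by exact_mod_cast h1
      linarith
    have hmin : min ((j : ℕ) + 1) ((u : ℕ) + 1) = (j : ℕ) + 1 := by omega
    have hmax : max ((j : ℕ) + 1) ((u : ℕ) + 1) = (u : ℕ) + 1 := by omega
    have hdiff : G j - G u = (σ2 * N * (2*U - N - 1) - C * (2*U - 1)) / N^2 := by
      rw [hG j, hG u, hmin, hmax, min_self, max_self]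
      push_cast
      rw [hjv, hCdef, hUdef]
      field_simp
      ring
    have hpos : 0 < (σ2 * N * (2*U - N - 1) - C * (2*U - 1)) / N^2 := by
      apply div_pos _ (by positivity)
      nlinarith [hgt]
    have hlt : G u < G j := by linarith [hdiff.ge, hdiff.le]
    exact ⟨hlt, fun hall => absurd (hall j) (not_le.2 hlt)⟩
end

section
/- Fix integers n ≥ 2 and u ∈ {1,…,n−1}, and reals β̄² > 0, σ² ≥ 0. With the weights d_i = √( n / (i(n−i)) ), the quantity G_i = d_i² (i(n−i)/n) σ² + β̄² d_i² d_u² (min(i,u))² (n − max(i,u))² / n² simplifies to G_i = σ² + β̄² · min(i,u)·(n − max(i,u)) / ( max(i,u)·(n − min(i,u)) ), i.e., G_i = σ² + β̄² i(n−u)/(u(n−i)) for i ≤ u and G_i = σ² + β̄² u(n−i)/(i(n−u)) for i > u. Moreover i ↦ G_i is strictly increasing on {1,…,u} and strictly decreasing on {u,…,n−1}; in particular u is the unique maximizer of G over {1,…,n−1}. -/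
open BigOperators

set_option maxHeartbeats 1000000

/-- deterministic core of Theorem 2.  For `n ≥ 2`, a change-point
`u ∈ {1,…,n−1}` (1-based `u ↦ (u:ℕ)+1`), `β̄² > 0`, `σ² ≥ 0` and weights
`dᵢ = √(n/(i(n−i)))`, the quantity
`Gᵢ = dᵢ²(i(n−i)/n)σ² + β̄² dᵢ² d_u² min(i,u)²(n−max(i,u))²/n²` simplifies to
`Gᵢ = σ² + β̄² min(i,u)(n−max(i,u))/(max(i,u)(n−min(i,u)))`; it is strictly increasing on
`{1,…,u}`, strictly decreasing on `{u,…,n−1}`, and `u` is its unique maximizer. -/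
theorem statement16 (n : ℕ) (hn : 2 ≤ n) (u : Fin (n-1))
    (betabar2 σ2 : ℝ) (hb2 : 0 < betabar2) (hσ2 : 0 ≤ σ2)
    (d : Fin (n-1) → ℝ)
    (hd : ∀ i : Fin (n-1),
      d i = Real.sqrt ((n : ℝ) / ((((i : ℕ) + 1 : ℝ)) * ((n : ℝ) - ((i : ℕ) + 1)))))
    (G : Fin (n-1) → ℝ)
    (hG : ∀ i, G i = (d i) ^ 2 * ((((i : ℕ) + 1 : ℝ)) * ((n : ℝ) - ((i : ℕ) + 1)) / n)
        * σ2
      + betabar2 * (d i) ^ 2 * (d u) ^ 2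
        * (((min ((i : ℕ) + 1) ((u : ℕ) + 1) : ℕ) : ℝ)) ^ 2
        * ((n : ℝ) - ((max ((i : ℕ) + 1) ((u : ℕ) + 1) : ℕ) : ℝ)) ^ 2 / (n : ℝ) ^ 2) :
    (∀ i, G i = σ2 + betabar2
      * (((min ((i : ℕ) + 1) ((u : ℕ) + 1) : ℕ) : ℝ)
          * ((n : ℝ) - ((max ((i : ℕ) + 1) ((u : ℕ) + 1) : ℕ) : ℝ)))
      / (((max ((i : ℕ) + 1) ((u : ℕ) + 1) : ℕ) : ℝ)
          * ((n : ℝ) - ((min ((i : ℕ) + 1) ((u : ℕ) + 1) : ℕ) : ℝ)))) ∧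
    (∀ i j : Fin (n-1), i < j → j ≤ u → G i < G j) ∧
    (∀ i j : Fin (n-1), u ≤ i → i < j → G j < G i) ∧
    (∀ i, i ≠ u → G i < G u) := by
  have hn0 : (0:ℝ) < n := by positivity
  have key : ∀ i : Fin (n-1), (0:ℝ) < ((i:ℕ)+1 : ℝ) ∧ ((i:ℕ)+1 : ℝ) < n := by
    intro i
    refine ⟨by positivity, ?_⟩
    have h := i.isLt
    have h2 : (i:ℕ)+1 < n := by omega
    exact_mod_cast h2
  have hd2 : ∀ i : Fin (n-1),
      (d i)^2 = (n:ℝ)/((((i:ℕ)+1:ℝ))*((n:ℝ)-((i:ℕ)+1))) := by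
    intro i
    rw [hd i, Real.sq_sqrt]
    obtain ⟨h1, h2⟩ := key i
    have : (0:ℝ) < ((i:ℕ)+1:ℝ)*((n:ℝ)-((i:ℕ)+1)) := by nlinarith
    positivity
  have hG' : ∀ i, G i = σ2 + betabar2
      * (((min ((i : ℕ) + 1) ((u : ℕ) + 1) : ℕ) : ℝ)
          * ((n : ℝ) - ((max ((i : ℕ) + 1) ((u : ℕ) + 1) : ℕ) : ℝ)))
      / (((max ((i : ℕ) + 1) ((u : ℕ) + 1) : ℕ) : ℝ)
          * ((n : ℝ) - ((min ((i : ℕ) + 1) ((u : ℕ) + 1) : ℕ) : ℝ))) := by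
    intro i
    obtain ⟨hi1, hi2⟩ := key i
    obtain ⟨hu1, hu2⟩ := key u
    have hi0 : ((i:ℕ)+1:ℝ) ≠ 0 := ne_of_gt hi1
    have hu0 : ((u:ℕ)+1:ℝ) ≠ 0 := ne_of_gt hu1
    have hni : (n:ℝ) - ((i:ℕ)+1) ≠ 0 := by intro h; nlinarith
    have hnu : (n:ℝ) - ((u:ℕ)+1) ≠ 0 := by intro h; nlinarith
    have hnn : (n:ℝ) ≠ 0 := ne_of_gt hn0
    rw [hG i, hd2 i, hd2 u]
    rcases le_total ((i:ℕ)+1) ((u:ℕ)+1) with h | h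
    · rw [min_eq_left h, max_eq_right h]
      push_cast
      field_simp
    · rw [min_eq_right h, max_eq_left h]
      push_cast
      field_simp
  have inc : ∀ i j : Fin (n-1), i < j → j ≤ u → G i < G j := by
    intro i j hij hju
    obtain ⟨hi1, hi2⟩ := key i
    obtain ⟨hj1, hj2⟩ := key j
    obtain ⟨hu1, hu2⟩ := key u
    have hijn : (i:ℕ) < (j:ℕ) := hij
    have hjun : (j:ℕ) ≤ (u:ℕ) := hju
    have hiu : (i:ℕ)+1 ≤ (u:ℕ)+1 := by omega
    have hju' : (j:ℕ)+1 ≤ (u:ℕ)+1 := by omega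
    rw [hG' i, hG' j, min_eq_left hiu, max_eq_right hiu, min_eq_left hju',
      max_eq_right hju']
    push_cast
    have hijR : ((i:ℕ)+1:ℝ) < ((j:ℕ)+1:ℝ) := by exact_mod_cast Nat.succ_lt_succ hijn
    have hjuR : ((j:ℕ)+1:ℝ) ≤ ((u:ℕ)+1:ℝ) := by exact_mod_cast Nat.succ_le_succ hjun
    have hdenpos1 : (0:ℝ) < ((u:ℕ)+1:ℝ) * ((n:ℝ) - ((i:ℕ)+1)) := by nlinarith
    have hdenpos2 : (0:ℝ) < ((u:ℕ)+1:ℝ) * ((n:ℝ) - ((j:ℕ)+1)) := by nlinarith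
    have hnc : (0:ℝ) < (n:ℝ) - ((u:ℕ)+1) := by nlinarith
    rw [add_lt_add_iff_left]
    rw [div_lt_div_iff₀ hdenpos1 hdenpos2]
    have hxy : ((i:ℕ)+1:ℝ)*((n:ℝ)-((j:ℕ)+1)) < ((j:ℕ)+1:ℝ)*((n:ℝ)-((i:ℕ)+1)) := by
      nlinarith
    nlinarith [mul_pos (mul_pos (mul_pos hb2 hu1) hu1) hnc, hxy]
  have dec : ∀ i j : Fin (n-1), u ≤ i → i < j → G j < G i := by
    intro i j hui hij
    obtain ⟨hi1, hi2⟩ := key i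
    obtain ⟨hj1, hj2⟩ := key j
    obtain ⟨hu1, hu2⟩ := key u
    have hijn : (i:ℕ) < (j:ℕ) := hij
    have huin : (u:ℕ) ≤ (i:ℕ) := hui
    have hui' : (u:ℕ)+1 ≤ (i:ℕ)+1 := by omega
    have huj' : (u:ℕ)+1 ≤ (j:ℕ)+1 := by omega
    rw [hG' i, hG' j, min_eq_right hui', max_eq_left hui', min_eq_right huj',
      max_eq_left huj']
    push_cast
    have hijR : ((i:ℕ)+1:ℝ) < ((j:ℕ)+1:ℝ) := by exact_mod_cast Nat.succ_lt_succ hijn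
    have huiR : ((u:ℕ)+1:ℝ) ≤ ((i:ℕ)+1:ℝ) := by exact_mod_cast Nat.succ_le_succ huin
    have hdenpos1 : (0:ℝ) < ((i:ℕ)+1:ℝ) * ((n:ℝ) - ((u:ℕ)+1)) := by nlinarith
    have hdenpos2 : (0:ℝ) < ((j:ℕ)+1:ℝ) * ((n:ℝ) - ((u:ℕ)+1)) := by nlinarith
    have hnj : (0:ℝ) < (n:ℝ) - ((j:ℕ)+1) := by nlinarith
    have hni : (0:ℝ) < (n:ℝ) - ((i:ℕ)+1) := by nlinarith
    rw [add_lt_add_iff_left]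
    rw [div_lt_div_iff₀ hdenpos2 hdenpos1]
    have h0 : ((n:ℝ)-((j:ℕ)+1))*(((i:ℕ)+1):ℝ) < ((n:ℝ)-((i:ℕ)+1))*(((j:ℕ)+1):ℝ) := by
      nlinarith
    have hxy := mul_lt_mul_of_pos_left h0 hu1
    nlinarith [mul_pos (mul_pos hb2 (sub_pos.mpr hu2)) (sub_pos.mpr hu2), hxy]
  refine ⟨hG', inc, dec, ?_⟩
  intro i hi
  rcases lt_or_gt_of_ne hi with h | h
  · exact inc i u h le_rfl
  · exact dec u i le_rfl h
end

section
/- Let 1 ≤ a ≤ b ≤ n−1, assume p_u = 0 for u ∉ {a,…,b}, and consider the fluctuating change-point quantity with the weights d_i = √( n / (i(n−i)) ): G_i = β̄² (d_i²/n²) [ Σ_{u=1}^{i} p_u d_u² u² (n−i)² + Σ_{u=i+1}^{n−1} p_u d_u² (n−u)² i² ] + d_i² (i(n−i)/n) σ², with β̄² > 0. Then for every i ∈ {1,…,a}: G_i = σ² + β̄² · ( i/(n−i) ) · E[(n−U)/U], which is strictly increasing in i on {1,…,a}; and for every i ∈ {b,…,n−1}: G_i = σ² + β̄² · ( (n−i)/i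 ) · E[U/(n−U)], which is strictly decreasing in i on {b,…,n−1}. Consequently, for every σ² ≥ 0, every maximizer of G over {1,…,n−1} lies in {a,…,b}. -/
open BigOperators

/-- deterministic core of Theorem 3, part 2; weights
`dᵢ = √(n/(i(n−i)))`, 1-based `i ↦ (i:ℕ)+1`.  Let `P_U = (p_v)` be a probability
distribution on `{1,…,n−1}` with support contained in `{a,…,b}`, `p_a > 0`, `p_b > 0`,
and `Gᵢ = β̄²(dᵢ²/n²)[Σ_{u≤i} p_u d_u² u²(n−i)² + Σ_{u>i} p_u d_u² (n−u)² i²]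
+ dᵢ²(i(n−i)/n)σ²`.  Then for `i ≤ a`, `Gᵢ = σ² + β̄² (i/(n−i)) E[(n−U)/U]`, strictly
increasing on `{1,…,a}`; for `i ≥ b`, `Gᵢ = σ² + β̄² ((n−i)/i) E[U/(n−U)]`, strictly
decreasing on `{b,…,n−1}`; consequently every maximizer of `G` lies in `{a,…,b}`, for
every `σ² ≥ 0`. -/
theorem statement19 (n : ℕ) (hn : 2 ≤ n) (betabar2 σ2 : ℝ)
    (hb2 : 0 < betabar2) (hσ2 : 0 ≤ σ2)
    (pd : Fin (n-1) → ℝ) (hpd : ∀ v, 0 ≤ pd v) (hpdsum : ∑ v : Fin (n-1), pd v = 1)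
    (a b : Fin (n-1)) (hab : a ≤ b)
    (hsupp : ∀ v : Fin (n-1), ¬(a ≤ v ∧ v ≤ b) → pd v = 0)
    (hpa : 0 < pd a) (hpb : 0 < pd b)
    (d : Fin (n-1) → ℝ)
    (hd : ∀ i : Fin (n-1),
      d i = Real.sqrt ((n : ℝ) / ((((i : ℕ) + 1 : ℝ)) * ((n : ℝ) - ((i : ℕ) + 1)))))
    (G : Fin (n-1) → ℝ)
    (hG : ∀ i, G i = betabar2 * ((d i) ^ 2 / (n : ℝ) ^ 2) *
        ((∑ v ∈ Finset.univ.filter (fun v : Fin (n-1) => v ≤ i),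
            pd v * (d v) ^ 2 * (((v : ℕ) + 1 : ℝ)) ^ 2 * ((n : ℝ) - ((i : ℕ) + 1)) ^ 2)
          + (∑ v ∈ Finset.univ.filter (fun v : Fin (n-1) => i < v),
            pd v * (d v) ^ 2 * ((n : ℝ) - ((v : ℕ) + 1)) ^ 2 * (((i : ℕ) + 1 : ℝ)) ^ 2))
      + (d i) ^ 2 * ((((i : ℕ) + 1 : ℝ)) * ((n : ℝ) - ((i : ℕ) + 1)) / n) * σ2) :
    (∀ i : Fin (n-1), i ≤ a →
      G i = σ2 + betabar2 * ((((i : ℕ) + 1 : ℝ)) / ((n : ℝ) - ((i : ℕ) + 1)))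
        * (∑ v : Fin (n-1), pd v * ((n : ℝ) - ((v : ℕ) + 1)) / (((v : ℕ) + 1 : ℝ)))) ∧
    (∀ i j : Fin (n-1), i < j → j ≤ a → G i < G j) ∧
    (∀ i : Fin (n-1), b ≤ i →
      G i = σ2 + betabar2 * (((n : ℝ) - ((i : ℕ) + 1)) / (((i : ℕ) + 1 : ℝ)))
        * (∑ v : Fin (n-1), pd v * (((v : ℕ) + 1 : ℝ)) / ((n : ℝ) - ((v : ℕ) + 1)))) ∧
    (∀ i j : Fin (n-1), b ≤ i → i < j → G j < G i) ∧
    (∀ i, (∀ j, G j ≤ G i) → (a ≤ i ∧ i ≤ b)) := by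
  have hnR : (2:ℝ) ≤ (n:ℝ) := by exact_mod_cast hn
  have key : ∀ i : Fin (n-1), 0 < ((i:ℕ) + 1 : ℝ) ∧ ((i:ℕ) + 1 : ℝ) < (n:ℝ) := by
    intro i
    have h1 : (i:ℕ) + 1 < n := by have := i.isLt; omega
    constructor
    · positivity
    · exact_mod_cast h1
  have hd2 : ∀ i : Fin (n-1),
      (d i) ^ 2 = (n:ℝ) / (((i:ℕ) + 1 : ℝ) * ((n:ℝ) - ((i:ℕ) + 1))) := by
    intro i
    obtain ⟨h1, h2⟩ := key i
    rw [hd i, sq, Real.mul_self_sqrt]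
    apply div_nonneg (by linarith)
    apply mul_nonneg (by linarith) (by linarith)
  -- pointwise simplification in the "i ≤ a" regime
  have ptA : ∀ i : Fin (n-1), i ≤ a → ∀ v : Fin (n-1),
      betabar2 * ((d i) ^ 2 / (n:ℝ) ^ 2) *
        (if v ≤ i then pd v * (d v) ^ 2 * (((v:ℕ) + 1 : ℝ)) ^ 2 * ((n:ℝ) - ((i:ℕ) + 1)) ^ 2
          else pd v * (d v) ^ 2 * ((n:ℝ) - ((v:ℕ) + 1)) ^ 2 * (((i:ℕ) + 1 : ℝ)) ^ 2)
      = betabar2 * ((((i:ℕ) + 1 : ℝ)) / ((n:ℝ) - ((i:ℕ) + 1)))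
          * (pd v * ((n:ℝ) - ((v:ℕ) + 1)) / (((v:ℕ) + 1 : ℝ))) := by
    intro i hia v
    rcases eq_or_ne (pd v) 0 with h0 | h0
    · split_ifs <;> simp [h0]
    · have hav : a ≤ v ∧ v ≤ b := by
        by_contra h; exact h0 (hsupp v h)
      obtain ⟨hi1, hi2⟩ := key i
      obtain ⟨hv1, hv2⟩ := key v
      have hiv : i ≤ v := le_trans hia hav.1
      split_ifs with hvle
      · have : v = i := le_antisymm hvle hiv
        subst this
        rw [hd2 v]
        have e1 : ((v:ℕ) + 1 : ℝ) ≠ 0 := ne_of_gt hv1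
        have e2 : (n:ℝ) - ((v:ℕ) + 1) ≠ 0 := by linarith
        have e3 : (n:ℝ) ≠ 0 := by linarith
        field_simp
        try ring
      · rw [hd2 v, hd2 i]
        have e1 : ((v:ℕ) + 1 : ℝ) ≠ 0 := ne_of_gt hv1
        have e2 : (n:ℝ) - ((v:ℕ) + 1) ≠ 0 := by linarith
        have e3 : ((i:ℕ) + 1 : ℝ) ≠ 0 := ne_of_gt hi1
        have e4 : (n:ℝ) - ((i:ℕ) + 1) ≠ 0 := by linarith
        have e5 : (n:ℝ) ≠ 0 := by linarith
        field_simp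
        try ring
  -- pointwise simplification in the "b ≤ i" regime
  have ptB : ∀ i : Fin (n-1), b ≤ i → ∀ v : Fin (n-1),
      betabar2 * ((d i) ^ 2 / (n:ℝ) ^ 2) *
        (if v ≤ i then pd v * (d v) ^ 2 * (((v:ℕ) + 1 : ℝ)) ^ 2 * ((n:ℝ) - ((i:ℕ) + 1)) ^ 2
          else pd v * (d v) ^ 2 * ((n:ℝ) - ((v:ℕ) + 1)) ^ 2 * (((i:ℕ) + 1 : ℝ)) ^ 2)
      = betabar2 * (((n:ℝ) - ((i:ℕ) + 1)) / (((i:ℕ) + 1 : ℝ)))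
          * (pd v * (((v:ℕ) + 1 : ℝ)) / ((n:ℝ) - ((v:ℕ) + 1))) := by
    intro i hbi v
    rcases eq_or_ne (pd v) 0 with h0 | h0
    · split_ifs <;> simp [h0]
    · have hav : a ≤ v ∧ v ≤ b := by
        by_contra h; exact h0 (hsupp v h)
      obtain ⟨hi1, hi2⟩ := key i
      obtain ⟨hv1, hv2⟩ := key v
      have hvi : v ≤ i := le_trans hav.2 hbi
      rw [if_pos hvi, hd2 v, hd2 i]
      have e1 : ((v:ℕ) + 1 : ℝ) ≠ 0 := ne_of_gt hv1
      have e2 : (n:ℝ) - ((v:ℕ) + 1) ≠ 0 := by linarith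
      have e3 : ((i:ℕ) + 1 : ℝ) ≠ 0 := ne_of_gt hi1
      have e4 : (n:ℝ) - ((i:ℕ) + 1) ≠ 0 := by linarith
      have e5 : (n:ℝ) ≠ 0 := by linarith
      field_simp
      try ring
  -- rewriting the split sum as a single sum over univ
  have hsum : ∀ i : Fin (n-1),
      (∑ v ∈ Finset.univ.filter (fun v : Fin (n-1) => v ≤ i),
          pd v * (d v) ^ 2 * (((v:ℕ) + 1 : ℝ)) ^ 2 * ((n:ℝ) - ((i:ℕ) + 1)) ^ 2)
        + (∑ v ∈ Finset.univ.filter (fun v : Fin (n-1) => i < v),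
          pd v * (d v) ^ 2 * ((n:ℝ) - ((v:ℕ) + 1)) ^ 2 * (((i:ℕ) + 1 : ℝ)) ^ 2)
      = ∑ v : Fin (n-1),
          (if v ≤ i then pd v * (d v) ^ 2 * (((v:ℕ) + 1 : ℝ)) ^ 2 * ((n:ℝ) - ((i:ℕ) + 1)) ^ 2
            else pd v * (d v) ^ 2 * ((n:ℝ) - ((v:ℕ) + 1)) ^ 2 * (((i:ℕ) + 1 : ℝ)) ^ 2) := by
    intro i
    rw [Finset.sum_ite]
    congr 1
    apply Finset.sum_congr _ (fun _ _ => rfl)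
    ext v
    simp [not_le]
  have hnoise : ∀ i : Fin (n-1),
      (d i) ^ 2 * ((((i:ℕ) + 1 : ℝ)) * ((n:ℝ) - ((i:ℕ) + 1)) / n) * σ2 = σ2 := by
    intro i
    obtain ⟨hi1, hi2⟩ := key i
    rw [hd2 i]
    have e1 : ((i:ℕ) + 1 : ℝ) ≠ 0 := ne_of_gt hi1
    have e2 : (n:ℝ) - ((i:ℕ) + 1) ≠ 0 := by linarith
    have e3 : (n:ℝ) ≠ 0 := by linarith
    field_simp
  -- formula in the "i ≤ a" regime
  have fA : ∀ i : Fin (n-1), i ≤ a →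
      G i = σ2 + betabar2 * ((((i:ℕ) + 1 : ℝ)) / ((n:ℝ) - ((i:ℕ) + 1)))
        * (∑ v : Fin (n-1), pd v * ((n:ℝ) - ((v:ℕ) + 1)) / (((v:ℕ) + 1 : ℝ))) := by
    intro i hia
    rw [hG i, hnoise i, hsum i, Finset.mul_sum, Finset.mul_sum]
    rw [Finset.sum_congr rfl (fun v _ => ptA i hia v)]
    ring
  -- formula in the "b ≤ i" regime
  have fB : ∀ i : Fin (n-1), b ≤ i →
      G i = σ2 + betabar2 * (((n:ℝ) - ((i:ℕ) + 1)) / (((i:ℕ) + 1 : ℝ)))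
        * (∑ v : Fin (n-1), pd v * (((v:ℕ) + 1 : ℝ)) / ((n:ℝ) - ((v:ℕ) + 1))) := by
    intro i hbi
    rw [hG i, hnoise i, hsum i, Finset.mul_sum, Finset.mul_sum]
    rw [Finset.sum_congr rfl (fun v _ => ptB i hbi v)]
    ring
  -- positivity of the expectations
  have hSA : 0 < ∑ v : Fin (n-1), pd v * ((n:ℝ) - ((v:ℕ) + 1)) / (((v:ℕ) + 1 : ℝ)) := by
    refine Finset.sum_pos' ?_ ⟨a, Finset.mem_univ a, ?_⟩
    · intro v _
      obtain ⟨hv1, hv2⟩ := key v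
      apply div_nonneg (mul_nonneg (hpd v) (by linarith)) (by linarith)
    · obtain ⟨hv1, hv2⟩ := key a
      exact div_pos (mul_pos hpa (by linarith)) hv1
  have hSB : 0 < ∑ v : Fin (n-1), pd v * (((v:ℕ) + 1 : ℝ)) / ((n:ℝ) - ((v:ℕ) + 1)) := by
    refine Finset.sum_pos' ?_ ⟨b, Finset.mem_univ b, ?_⟩
    · intro v _
      obtain ⟨hv1, hv2⟩ := key v
      apply div_nonneg (mul_nonneg (hpd v) (by linarith)) (by linarith)
    · obtain ⟨hv1, hv2⟩ := key b
      exact div_pos (mul_pos hpb hv1) (by linarith)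
  -- strict monotonicity on {1,…,a}
  have incA : ∀ i j : Fin (n-1), i < j → j ≤ a → G i < G j := by
    intro i j hij hja
    rw [fA i (le_trans (le_of_lt hij) hja), fA j hja]
    obtain ⟨hi1, hi2⟩ := key i
    obtain ⟨hj1, hj2⟩ := key j
    have hijR : ((i:ℕ) + 1 : ℝ) < ((j:ℕ) + 1 : ℝ) := by
      have : (i:ℕ) < (j:ℕ) := hij
      have : ((i:ℕ):ℝ) < ((j:ℕ):ℝ) := by exact_mod_cast this
      linarith
    have hr : (((i:ℕ) + 1 : ℝ)) / ((n:ℝ) - ((i:ℕ) + 1))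
        < (((j:ℕ) + 1 : ℝ)) / ((n:ℝ) - ((j:ℕ) + 1)) := by
      rw [div_lt_div_iff₀ (by linarith) (by linarith)]
      nlinarith
    have := mul_lt_mul_of_pos_right (mul_lt_mul_of_pos_left hr hb2) hSA
    linarith
  -- strict antitonicity on {b,…,n−1}
  have decB : ∀ i j : Fin (n-1), b ≤ i → i < j → G j < G i := by
    intro i j hbi hij
    rw [fB i hbi, fB j (le_trans hbi (le_of_lt hij))]
    obtain ⟨hi1, hi2⟩ := key i
    obtain ⟨hj1, hj2⟩ := key j
    have hijR : ((i:ℕ) + 1 : ℝ) < ((j:ℕ) + 1 : ℝ) := by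
      have : (i:ℕ) < (j:ℕ) := hij
      have : ((i:ℕ):ℝ) < ((j:ℕ):ℝ) := by exact_mod_cast this
      linarith
    have hr : ((n:ℝ) - ((j:ℕ) + 1)) / (((j:ℕ) + 1 : ℝ))
        < ((n:ℝ) - ((i:ℕ) + 1)) / (((i:ℕ) + 1 : ℝ)) := by
      rw [div_lt_div_iff₀ hj1 hi1]
      nlinarith
    have := mul_lt_mul_of_pos_right (mul_lt_mul_of_pos_left hr hb2) hSB
    linarith
  refine ⟨fA, incA, fB, decB, ?_⟩
  intro i hmax
  constructor
  · by_contra h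
    have hia : i < a := lt_of_not_ge h
    have := incA i a hia (le_refl a)
    exact absurd (hmax a) (not_le.mpr this)
  · by_contra h
    have hbi : b < i := lt_of_not_ge h
    have := decB b i (le_refl b) hbi
    exact absurd (hmax b) (not_le.mpr this)
end
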